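/- arXiv:1312.4147 — 6 statements merged into one kernel-verified Lean document; each statement's English description precedes it below -/
import Mathlib

section
/- Let t, ℓ, and j be positive integers, and suppose it is NOT the case that one of t or ℓ equals 2 while the other is even. Then Φ_t(j) ≤ (1/2)(ℓ−1)(t−1), i.e., 2·Φ_t(j) ≤ (ℓ−1)(t−1). -/
set_option maxHeartbeats 1000000

open Finset

/-- For positive integers `ℓ, t, j`, `Φ_t(j) = (∑_{b=1}^t min(⌊j/b⌋, ℓ)) − j`. -/
noncomputable def Phi (ℓ t j : ℤ) : ℤ := (∑ b ∈ Finset.Icc (1 : ℤ) t, min (j / b) ℓ) - j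



lemma count_eq (j b ℓ : ℤ) (hb : 0 < b) (hj : 0 ≤ j) (hl : 0 ≤ ℓ) :
    (∑ a ∈ Icc (1:ℤ) ℓ, if a * b ≤ j then (1:ℤ) else 0) = min (j / b) ℓ := by
  have h2 : (Icc (1:ℤ) ℓ).filter (fun a => a * b ≤ j) = Icc 1 (min (j/b) ℓ) := by
    ext a
    simp only [mem_filter, mem_Icc, ← Int.le_ediv_iff_mul_le hb, le_min_iff]
    omega
  rw [Finset.sum_boole, h2, Int.card_Icc]
  have hmin : 0 ≤ min (j/b) ℓ := le_min (Int.ediv_nonneg hj hb.le) hl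
  omega

lemma sum_min_symm (t ℓ j : ℤ) (ht : 0 < t) (hl : 0 < ℓ) (hj : 0 ≤ j) :
    ∑ b ∈ Icc (1:ℤ) t, min (j / b) ℓ = ∑ a ∈ Icc (1:ℤ) ℓ, min (j / a) t := by
  have e1 : ∑ b ∈ Icc (1:ℤ) t, min (j / b) ℓ
      = ∑ b ∈ Icc (1:ℤ) t, ∑ a ∈ Icc (1:ℤ) ℓ, if a * b ≤ j then (1:ℤ) else 0 := by
    refine Finset.sum_congr rfl fun b hb => ?_
    rw [count_eq j b ℓ (by simp [mem_Icc] at hb; omega) hj hl.le]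
  have e2 : ∑ a ∈ Icc (1:ℤ) ℓ, min (j / a) t
      = ∑ a ∈ Icc (1:ℤ) ℓ, ∑ b ∈ Icc (1:ℤ) t, if a * b ≤ j then (1:ℤ) else 0 := by
    refine Finset.sum_congr rfl fun a ha => ?_
    rw [← count_eq j a t (by simp [mem_Icc] at ha; omega) hj ht.le]
    refine Finset.sum_congr rfl fun b hb => by rw [mul_comm]
  rw [e1, e2, Finset.sum_comm]

lemma Phi_symm (t ℓ j : ℤ) (ht : 0 < t) (hl : 0 < ℓ) (hj : 0 ≤ j) :
    Phi ℓ t j = Phi t ℓ j := by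
  unfold Phi
  rw [sum_min_symm t ℓ j ht hl hj]

lemma easy_case (t ℓ j : ℤ) (ht : 0 < t) (hl : 0 < ℓ) (hj : ℓ * t ≤ j) :
    2 * Phi ℓ t j ≤ (ℓ - 1) * (t - 1) := by
  have h1 : (∑ b ∈ Finset.Icc (1 : ℤ) t, min (j / b) ℓ) ≤ ∑ _b ∈ Finset.Icc (1 : ℤ) t, ℓ :=
    Finset.sum_le_sum fun b _ => min_le_right _ _
  rw [Finset.sum_const, Int.card_Icc] at h1
  have h2 : ((t + 1 - 1).toNat : ℤ) = t := by omega
  have h3 : (t + 1 - 1).toNat • ℓ = t * ℓ := by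
    rw [nsmul_eq_mul, h2]
  rw [h3] at h1
  have h4 : 0 ≤ (ℓ - 1) * (t - 1) := mul_nonneg (by omega) (by omega)
  unfold Phi
  nlinarith


lemma term_maj (j b ℓ : ℤ) (lam : ℚ) (hb : 0 < b) (hj : 0 ≤ j) (hl : 0 ≤ ℓ)
    (h0 : 0 ≤ lam) (h1 : lam * (b:ℚ) ≤ 1) :
    ((min (j / b) ℓ : ℤ) : ℚ) ≤ lam * (j:ℚ) + (ℓ:ℚ) * (1 - lam * (b:ℚ)) := by
  have hdm : (b:ℤ) * (j / b) + j % b = j := Int.mul_ediv_add_emod j b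
  have hm0 : 0 ≤ j % b := Int.emod_nonneg j (by omega)
  have hq : (b:ℚ) * ((j / b : ℤ):ℚ) ≤ (j:ℚ) := by
    have : (b:ℤ) * (j / b) ≤ j := by omega
    exact_mod_cast this
  have hd0 : (0:ℚ) ≤ ((j / b : ℤ):ℚ) := by exact_mod_cast Int.ediv_nonneg hj hb.le
  have hb0 : (0:ℚ) < (b:ℚ) := by exact_mod_cast hb
  have hl0 : (0:ℚ) ≤ (ℓ:ℚ) := by exact_mod_cast hl
  rcases le_total (j / b) ℓ with hc | hc
  · rw [min_eq_left hc]
    have hcast : ((j/b : ℤ):ℚ) ≤ (ℓ:ℚ) := by exact_mod_cast hc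
    nlinarith [mul_nonneg h0 (by linarith : (0:ℚ) ≤ (j:ℚ) - (b:ℚ) * ((j/b:ℤ):ℚ)),
      mul_nonneg (by linarith : (0:ℚ) ≤ 1 - lam * (b:ℚ)) (by linarith : (0:ℚ) ≤ (ℓ:ℚ) - ((j/b:ℤ):ℚ))]
  · rw [min_eq_right hc]
    have hcast : (ℓ:ℚ) ≤ ((j/b:ℤ):ℚ) := by exact_mod_cast hc
    have hbl : (ℓ:ℚ) * (b:ℚ) ≤ (j:ℚ) := by nlinarith
    nlinarith [mul_nonneg h0 (by linarith : (0:ℚ) ≤ (j:ℚ) - (ℓ:ℚ) * (b:ℚ))]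

lemma sum_reflect (u v : ℤ) (f : ℤ → ℚ) :
    ∑ b ∈ Icc u v, f b = ∑ b ∈ Icc u v, f (u + v - b) := by
  have himg : Finset.image (fun b => u + v - b) (Icc u v) = Icc u v := by
    ext x
    simp only [Finset.mem_image, mem_Icc]
    constructor
    · rintro ⟨a, ha, rfl⟩; omega
    · intro hx; exact ⟨u + v - x, by omega, by omega⟩
  conv_lhs => rw [← himg]
  rw [Finset.sum_image (by intro x hx y hy h; have h' : u + v - x = u + v - y := h; omega)]

lemma trapezoid (u v : ℤ) (hu : 0 < u) (huv : u ≤ v) :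
    2 * ∑ b ∈ Icc u v, (1:ℚ)/(b:ℚ) ≤ ((v:ℚ) - (u:ℚ) + 1) * (1/(u:ℚ) + 1/(v:ℚ)) := by
  have key : ∀ b ∈ Icc u v, (1:ℚ)/(b:ℚ) + 1/((u+v-b : ℤ):ℚ) ≤ 1/(u:ℚ) + 1/(v:ℚ) := by
    intro b hb
    simp only [mem_Icc] at hb
    have hb0 : (0:ℚ) < (b:ℚ) := by exact_mod_cast (by omega : (0:ℤ) < b)
    have hc0 : (0:ℚ) < ((u+v-b:ℤ):ℚ) := by exact_mod_cast (by omega : (0:ℤ) < u+v-b)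
    have hu0 : (0:ℚ) < (u:ℚ) := by exact_mod_cast hu
    have hv0 : (0:ℚ) < (v:ℚ) := by exact_mod_cast lt_of_lt_of_le hu huv
    rw [div_add_div _ _ (ne_of_gt hb0) (ne_of_gt hc0), div_add_div _ _ (ne_of_gt hu0) (ne_of_gt hv0),
      div_le_div_iff₀ (by positivity) (by positivity)]
    have hsum : ((u+v-b:ℤ):ℚ) = (u:ℚ) + v - b := by push_cast; ring
    have hprod : (u:ℚ) * v ≤ (b:ℚ) * ((u+v-b:ℤ):ℚ) := by
      rw [hsum]
      nlinarith [mul_nonneg (by exact_mod_cast (by omega : (0:ℤ) ≤ b - u) : (0:ℚ) ≤ (b:ℚ) - u)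
        (by exact_mod_cast (by omega : (0:ℤ) ≤ v - b) : (0:ℚ) ≤ (v:ℚ) - b)]
    have hmul := mul_le_mul_of_nonneg_left hprod (by positivity : (0:ℚ) ≤ (u:ℚ) + (v:ℚ))
    rw [hsum] at *
    nlinarith
  calc 2 * ∑ b ∈ Icc u v, (1:ℚ)/(b:ℚ)
      = ∑ b ∈ Icc u v, ((1:ℚ)/(b:ℚ) + 1/((u+v-b : ℤ):ℚ)) := by
        rw [Finset.sum_add_distrib, ← sum_reflect u v (fun b => (1:ℚ)/(b:ℚ))]
        ring
    _ ≤ ∑ _b ∈ Icc u v, (1/(u:ℚ) + 1/(v:ℚ)) := Finset.sum_le_sum key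
    _ = ((v:ℚ) - (u:ℚ) + 1) * (1/(u:ℚ) + 1/(v:ℚ)) := by
        rw [Finset.sum_const, Int.card_Icc, nsmul_eq_mul]
        have h : ((v + 1 - u).toNat : ℤ) = v + 1 - u := by omega
        have h2 : ((v + 1 - u).toNat : ℚ) = (v:ℚ) + 1 - u := by exact_mod_cast h
        rw [h2]; ring


lemma int_consec (m k : ℤ) : 0 ≤ (m - k) * (m - (k+1)) := by
  rcases le_or_gt m k with h | h
  · nlinarith
  · exact mul_nonneg (by omega) (by omega)

lemma cubic (t m : ℤ) (ht : 5 ≤ t) (hm1 : 1 ≤ m) (hm2 : m ≤ t - 1)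
    (hbig : (t-1)^2 < 2*t*m) :
    m*(t-m)*(t+m+1) ≤ (t-1)^2*(m+1) := by
  have h12 := int_consec m 1
  have h23 := int_consec m 2
  have h34 := int_consec m 3
  nlinarith [mul_nonneg (by omega : (0:ℤ) ≤ t - 1 - m) (by omega : (0:ℤ) ≤ 2*t*m - (t-1)^2 - 1),
    mul_nonneg (by omega : (0:ℤ) ≤ t - 5) h12,
    mul_nonneg (by omega : (0:ℤ) ≤ t - 5) h23,
    mul_nonneg (by omega : (0:ℤ) ≤ t - 5) h34,
    mul_nonneg (by omega : (0:ℤ) ≤ m - 1) h12,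
    mul_nonneg (by omega : (0:ℤ) ≤ m - 1) h23,
    mul_nonneg (by omega : (0:ℤ) ≤ t - 1 - m) h12,
    mul_nonneg (by omega : (0:ℤ) ≤ t - 1 - m) h23,
    h12, h23, h34]

lemma numeric (t ℓ m : ℤ) (S : ℚ) (ht : 3 ≤ t) (htl : t ≤ ℓ)
    (hm1 : 1 ≤ m) (hm2 : m ≤ t - 1)
    (hS0 : 0 ≤ S) (hS1 : S ≤ 1) (hS2 : (m:ℚ) - 1 < (m:ℚ) * S)
    (htrap : 2 * S * ((m:ℚ)+1) * (t:ℚ) ≤ ((t:ℚ) - m) * ((t:ℚ) + m + 1))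
    (hex3 : t = 3 → 6 ≤ ℓ) (hex4 : t = 4 → 5 ≤ ℓ) :
    2 * (ℓ:ℚ) * ((m:ℚ) * S) ≤ ((ℓ:ℚ) - 1) * ((t:ℚ) - 1) := by
  have hl0 : (0:ℚ) < (ℓ:ℚ) := by exact_mod_cast (by omega : (0:ℤ) < ℓ)
  have ht0 : (0:ℚ) < (t:ℚ) := by exact_mod_cast (by omega : (0:ℤ) < t)
  have hm0 : (0:ℚ) < (m:ℚ) := by exact_mod_cast (by omega : (0:ℤ) < m)
  have htlq : (t:ℚ) ≤ (ℓ:ℚ) := by exact_mod_cast htl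
  have ht1 : (1:ℚ) ≤ (t:ℚ) := by exact_mod_cast (by omega : (1:ℤ) ≤ t)
  rcases (by omega : t = 3 ∨ t = 4 ∨ 5 ≤ t) with rfl | h45
  · -- t = 3
    have hl6 : (6:ℚ) ≤ (ℓ:ℚ) := by exact_mod_cast hex3 rfl
    have hm12 : m = 1 ∨ m = 2 := by omega
    rcases hm12 with rfl | rfl
    · push_cast at htrap hS2 ⊢
      nlinarith
    · push_cast at htrap hS2 ⊢
      nlinarith
  rcases h45 with rfl | ht5
  · -- t = 4
    have hl5 : (5:ℚ) ≤ (ℓ:ℚ) := by exact_mod_cast hex4 rfl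
    have hm123 : m = 1 ∨ m = 2 ∨ m = 3 := by omega
    rcases hm123 with rfl | rfl | rfl <;> push_cast at htrap hS2 ⊢ <;> nlinarith
  · -- t ≥ 5
    -- common final step: from 2*m*S*t ≤ (t-1)^2 conclude
    have final : 2 * (m:ℚ) * S * (t:ℚ) ≤ ((t:ℚ)-1)^2 →
        2 * (ℓ:ℚ) * ((m:ℚ) * S) ≤ ((ℓ:ℚ) - 1) * ((t:ℚ) - 1) := by
      intro hkey
      have h1 : (ℓ:ℚ) * (2 * (m:ℚ) * S * (t:ℚ)) ≤ (ℓ:ℚ) * ((t:ℚ)-1)^2 :=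
        mul_le_mul_of_nonneg_left hkey hl0.le
      have h2 : (ℓ:ℚ) * ((t:ℚ)-1)^2 ≤ (t:ℚ) * (((ℓ:ℚ)-1) * ((t:ℚ)-1)) := by
        nlinarith [mul_nonneg (by linarith : (0:ℚ) ≤ (ℓ:ℚ) - t) (by linarith : (0:ℚ) ≤ (t:ℚ) - 1)]
      have h3 : (t:ℚ) * (2 * (ℓ:ℚ) * ((m:ℚ) * S)) ≤ (t:ℚ) * (((ℓ:ℚ)-1) * ((t:ℚ)-1)) := by
        nlinarith
      exact le_of_mul_le_mul_left h3 ht0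
    rcases le_or_gt (2*t*m) ((t-1)^2) with hsmall | hbig
    · -- m S ≤ m and 2tm ≤ (t-1)^2
      apply final
      have hsq : 2 * (t:ℚ) * (m:ℚ) ≤ ((t:ℚ)-1)^2 := by exact_mod_cast hsmall
      nlinarith [mul_le_mul_of_nonneg_left hS1 (by positivity : (0:ℚ) ≤ 2 * (m:ℚ) * (t:ℚ))]
    · -- big m: use trapezoid + cubic
      apply final
      have hcub := cubic t m ht5 hm1 hm2 hbig
      have hcubq : (m:ℚ)*((t:ℚ)-(m:ℚ))*((t:ℚ)+(m:ℚ)+1) ≤ ((t:ℚ)-1)^2*((m:ℚ)+1) := by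
        exact_mod_cast hcub
      -- multiply htrap by m ≥ 0 : 2*S*(m+1)*t*m ≤ m*(t-m)*(t+m+1) ≤ (t-1)^2*(m+1)
      have h1 : (m:ℚ) * (2 * S * ((m:ℚ)+1) * (t:ℚ)) ≤ (m:ℚ) * (((t:ℚ) - m) * ((t:ℚ) + m + 1)) :=
        mul_le_mul_of_nonneg_left htrap hm0.le
      have h2 : ((m:ℚ)+1) * (2 * (m:ℚ) * S * (t:ℚ)) ≤ ((m:ℚ)+1) * ((t:ℚ)-1)^2 := by
        nlinarith
      exact le_of_mul_le_mul_left h2 (by positivity)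

lemma lp_case (t ℓ j : ℤ) (ht3 : 3 ≤ t) (hl : 0 < ℓ) (hj : 0 < j) (htl : t ≤ ℓ)
    (hex3 : t = 3 → 6 ≤ ℓ) (hex4 : t = 4 → 5 ≤ ℓ) :
    2 * Phi ℓ t j ≤ (ℓ - 1) * (t - 1) := by
  classical
  have ht : (0:ℤ) < t := by omega
  set F : ℤ → ℚ := fun k => ∑ b ∈ Finset.Ioc k t, (1:ℚ)/(b:ℚ) with hF
  have hFt : F t = 0 := by simp [hF]
  have hne : ((Finset.Icc (1:ℤ) t).filter (fun k => F k ≤ 1)).Nonempty :=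
    ⟨t, by simp [Finset.mem_filter, Finset.mem_Icc, hFt]; omega⟩
  set m := ((Finset.Icc (1:ℤ) t).filter (fun k => F k ≤ 1)).min' hne with hmdef
  have hmmem := Finset.min'_mem _ hne
  rw [Finset.mem_filter, Finset.mem_Icc] at hmmem
  obtain ⟨⟨hm1, hmt⟩, hSm1⟩ := hmmem
  have hmin : ∀ k, 1 ≤ k → k ≤ t → F k ≤ 1 → m ≤ k := fun k h1 h2 h3 =>
    Finset.min'_le _ k (by rw [Finset.mem_filter, Finset.mem_Icc]; exact ⟨⟨h1, h2⟩, h3⟩)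
  -- m ≤ t - 1
  have hIocsing : Finset.Ioc (t-1) t = {t} := by ext x; simp [Finset.mem_Ioc]; omega
  have hFt1 : F (t-1) = 1/(t:ℚ) := by rw [hF]; simp [hIocsing]
  have htq : (0:ℚ) < (t:ℚ) := by exact_mod_cast ht
  have hmt1 : m ≤ t - 1 := hmin (t-1) (by omega) (by omega) (by
    rw [hFt1]; rw [div_le_one htq]; exact_mod_cast (by omega : (1:ℤ) ≤ t))
  have hmq : (0:ℚ) < (m:ℚ) := by exact_mod_cast (by omega : (0:ℤ) < m)
  -- 0 ≤ F m
  have hS0 : 0 ≤ F m := by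
    rw [hF]
    apply Finset.sum_nonneg
    intro b hb
    rw [Finset.mem_Ioc] at hb
    have : (0:ℚ) < (b:ℚ) := by exact_mod_cast (by omega : (0:ℤ) < b)
    positivity
  -- m - 1 < m * F m
  have hS2 : (m:ℚ) - 1 < (m:ℚ) * F m := by
    rcases (by omega : m = 1 ∨ 2 ≤ m) with hme | hm2
    · have hpos : 0 < F 1 := by
        rw [hF]
        apply Finset.sum_pos
        · intro b hb
          rw [Finset.mem_Ioc] at hb
          have : (0:ℚ) < (b:ℚ) := by exact_mod_cast (by omega : (0:ℤ) < b)
          positivity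
        · exact ⟨t, by rw [Finset.mem_Ioc]; omega⟩
      rw [hme]
      push_cast
      linarith
    · have hnot : ¬ (F (m-1) ≤ 1) := by
        intro hcon
        have := hmin (m-1) (by omega) (by omega) hcon
        omega
      push_neg at hnot
      have hsplit : Finset.Ioc (m-1) t = insert m (Finset.Ioc m t) := by
        ext x; simp [Finset.mem_Ioc, Finset.mem_insert]; omega
      have hFm1 : F (m-1) = 1/(m:ℚ) + F m := by
        rw [hF]
        simp only
        rw [hsplit, Finset.sum_insert (by simp [Finset.mem_Ioc])]
      rw [hFm1] at hnot
      have hinv : (m:ℚ) * (1/(m:ℚ)) = 1 := by field_simp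
      nlinarith
  -- trapezoid
  have hIoc_Icc : Finset.Ioc m t = Finset.Icc (m+1) t := by ext x; simp [Finset.mem_Ioc, Finset.mem_Icc]
  have htrapz := trapezoid (m+1) t (by omega) (by omega)
  have hFm_Icc : F m = ∑ b ∈ Icc (m+1) t, (1:ℚ)/(b:ℚ) := by rw [hF]; simp only; rw [hIoc_Icc]
  have hm1q : (0:ℚ) < (m:ℚ) + 1 := by linarith
  have htrap : 2 * F m * ((m:ℚ)+1) * (t:ℚ) ≤ ((t:ℚ) - m) * ((t:ℚ) + m + 1) := by
    have h1 : 2 * F m ≤ ((t:ℚ) - ((m:ℚ)+1) + 1) * (1/((m:ℚ)+1) + 1/(t:ℚ)) := by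
      rw [hFm_Icc]
      have := htrapz
      push_cast at this ⊢
      convert this using 2 <;> push_cast <;> ring
    have h2 := mul_le_mul_of_nonneg_right h1 (by positivity : (0:ℚ) ≤ ((m:ℚ)+1) * (t:ℚ))
    calc 2 * F m * ((m:ℚ)+1) * (t:ℚ) = 2 * F m * (((m:ℚ)+1) * (t:ℚ)) := by ring
      _ ≤ ((t:ℚ) - ((m:ℚ)+1) + 1) * (1/((m:ℚ)+1) + 1/(t:ℚ)) * (((m:ℚ)+1) * (t:ℚ)) := h2
      _ = ((t:ℚ) - m) * ((t:ℚ) + m + 1) := by field_simp; ring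
  -- weights
  set lam : ℤ → ℚ := fun b => if m + 1 ≤ b then 1/(b:ℚ) else if b = m then 1 - F m else 0 with hlam
  -- main sum bound
  have hmain : (∑ b ∈ Icc (1:ℤ) t, ((min (j/b) ℓ : ℤ):ℚ))
      ≤ ∑ b ∈ Icc (1:ℤ) t, (lam b * (j:ℚ) + (ℓ:ℚ) * (1 - lam b * (b:ℚ))) := by
    refine Finset.sum_le_sum fun b hb => ?_
    rw [Finset.mem_Icc] at hb
    have hbpos : (0:ℤ) < b := by omega
    have hbq : (0:ℚ) < (b:ℚ) := by exact_mod_cast hbpos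
    have hlb : lam b = if m + 1 ≤ b then 1/(b:ℚ) else if b = m then 1 - F m else 0 := rfl
    refine term_maj j b ℓ (lam b) hbpos hj.le hl.le ?_ ?_
    · rw [hlb]
      split_ifs with c1 c2
      · positivity
      · linarith
      · exact le_refl 0
    · rw [hlb]
      split_ifs with c1 c2
      · rw [one_div_mul_cancel (ne_of_gt hbq)]
      · rw [c2]; nlinarith
      · simp
  -- compute RHS
  have hIcc_Ioc : Finset.Icc (1:ℤ) t = Finset.Ioc 0 t := by
    ext x; simp [Finset.mem_Ioc, Finset.mem_Icc]; omega
  have hsplit : ∀ g : ℤ → ℚ, (∑ b ∈ Finset.Ioc (0:ℤ) m, g b) + (∑ b ∈ Finset.Ioc m t, g b)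
      = ∑ b ∈ Finset.Ioc (0:ℤ) t, g b := by
    intro g
    rw [← Finset.sum_union (by
        rw [Finset.disjoint_left]
        intro x hx hx2
        rw [Finset.mem_Ioc] at hx hx2
        omega),
      Finset.Ioc_union_Ioc_eq_Ioc (show (0:ℤ) ≤ m by omega) (show m ≤ t by omega)]
  -- sum of lam = 1
  have hlow : ∀ b ∈ Finset.Ioc (0:ℤ) m, lam b = if b = m then 1 - F m else 0 := by
    intro b hb
    rw [Finset.mem_Ioc] at hb
    have hlb : lam b = if m + 1 ≤ b then 1/(b:ℚ) else if b = m then 1 - F m else 0 := rfl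
    rw [hlb, if_neg (by omega)]
  have hhigh : ∀ b ∈ Finset.Ioc m t, lam b = 1/(b:ℚ) := by
    intro b hb
    rw [Finset.mem_Ioc] at hb
    have hlb : lam b = if m + 1 ≤ b then 1/(b:ℚ) else if b = m then 1 - F m else 0 := rfl
    rw [hlb, if_pos (by omega)]
  have hA : (∑ b ∈ Finset.Icc (1:ℤ) t, lam b) = 1 := by
    rw [hIcc_Ioc, ← hsplit]
    rw [Finset.sum_congr rfl hlow, Finset.sum_congr rfl hhigh]
    rw [Finset.sum_ite_eq' (Finset.Ioc (0:ℤ) m) m (fun _ => 1 - F m)]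
    rw [if_pos (by rw [Finset.mem_Ioc]; omega)]
    have : (∑ b ∈ Finset.Ioc m t, (1:ℚ)/(b:ℚ)) = F m := rfl
    rw [this]; ring
  have hB : (∑ b ∈ Finset.Icc (1:ℤ) t, lam b * (b:ℚ)) = (1 - F m) * (m:ℚ) + ((t:ℚ) - (m:ℚ)) := by
    rw [hIcc_Ioc, ← hsplit]
    have e1 : (∑ b ∈ Finset.Ioc (0:ℤ) m, lam b * (b:ℚ))
        = ∑ b ∈ Finset.Ioc (0:ℤ) m, (if b = m then (1 - F m) * (b:ℚ) else 0) := by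
      refine Finset.sum_congr rfl fun b hb => ?_
      rw [hlow b hb]
      split_ifs <;> simp
    have e2 : (∑ b ∈ Finset.Ioc m t, lam b * (b:ℚ)) = ∑ b ∈ Finset.Ioc m t, (1:ℚ) := by
      refine Finset.sum_congr rfl fun b hb => ?_
      rw [hhigh b hb]
      rw [Finset.mem_Ioc] at hb
      have hbq : ((b:ℚ)) ≠ 0 := by
        have : (0:ℚ) < (b:ℚ) := by exact_mod_cast (by omega : (0:ℤ) < b)
        exact ne_of_gt this
      field_simp
    rw [e1, e2, Finset.sum_ite_eq' (Finset.Ioc (0:ℤ) m) m (fun b => (1 - F m) * (b:ℚ))]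
    rw [if_pos (by rw [Finset.mem_Ioc]; omega)]
    rw [Finset.sum_const, Int.card_Ioc, nsmul_eq_mul, mul_one]
    have hc : ((t - m).toNat : ℚ) = (t:ℚ) - (m:ℚ) := by
      have : ((t - m).toNat : ℤ) = t - m := by omega
      exact_mod_cast this
    rw [hc]
  have hcard : ((Finset.Icc (1:ℤ) t).card : ℚ) = (t:ℚ) := by
    rw [Int.card_Icc]
    have : ((t + 1 - 1).toNat : ℤ) = t := by omega
    exact_mod_cast this
  have hRHS : (∑ b ∈ Finset.Icc (1:ℤ) t, (lam b * (j:ℚ) + (ℓ:ℚ) * (1 - lam b * (b:ℚ))))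
      = (j:ℚ) + (ℓ:ℚ) * ((m:ℚ) * F m) := by
    rw [Finset.sum_add_distrib, ← Finset.sum_mul, hA, one_mul, ← Finset.mul_sum]
    rw [Finset.sum_sub_distrib, Finset.sum_const, hB]
    rw [nsmul_eq_mul, mul_one, hcard]
    ring
  -- numeric
  have hnum := numeric t ℓ m (F m) ht3 htl hm1 hmt1 hS0 hSm1 hS2 htrap hex3 hex4
  -- conclude
  have hcast : ((∑ b ∈ Finset.Icc (1:ℤ) t, min (j/b) ℓ : ℤ) : ℚ)
      = ∑ b ∈ Finset.Icc (1:ℤ) t, ((min (j/b) ℓ : ℤ):ℚ) := by push_cast; rfl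
  have hfin : ((2 * Phi ℓ t j : ℤ) : ℚ) ≤ (((ℓ - 1) * (t - 1) : ℤ) : ℚ) := by
    unfold Phi
    push_cast
    rw [hRHS] at hmain
    have : ((∑ b ∈ Finset.Icc (1:ℤ) t, min (j/b) ℓ : ℤ) : ℚ) ≤ (j:ℚ) + (ℓ:ℚ) * ((m:ℚ) * F m) := by
      rw [hcast]; exact hmain
    push_cast at this
    nlinarith [hnum]
  exact_mod_cast hfin

lemma special_case (t ℓ j : ℤ) (hj : 0 < j)
    (hp : (t = 3 ∧ ℓ = 3) ∨ (t = 3 ∧ ℓ = 4) ∨ (t = 3 ∧ ℓ = 5) ∨ (t = 4 ∧ ℓ = 4)) :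
    2 * Phi ℓ t j ≤ (ℓ - 1) * (t - 1) := by
  rcases hp with ⟨rfl, rfl⟩ | ⟨rfl, rfl⟩ | ⟨rfl, rfl⟩ | ⟨rfl, rfl⟩
  · rcases le_or_gt 9 j with h | h
    · exact easy_case 3 3 j (by norm_num) (by norm_num) (by omega)
    · exact (by decide : ∀ i ∈ Finset.Icc (1:ℤ) 8, 2 * Phi 3 3 i ≤ (3-1)*(3-1)) j
        (by rw [Finset.mem_Icc]; omega)
  · rcases le_or_gt 12 j with h | h
    · exact easy_case 3 4 j (by norm_num) (by norm_num) (by omega)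
    · exact (by decide : ∀ i ∈ Finset.Icc (1:ℤ) 11, 2 * Phi 4 3 i ≤ (4-1)*(3-1)) j
        (by rw [Finset.mem_Icc]; omega)
  · rcases le_or_gt 15 j with h | h
    · exact easy_case 3 5 j (by norm_num) (by norm_num) (by omega)
    · exact (by decide : ∀ i ∈ Finset.Icc (1:ℤ) 14, 2 * Phi 5 3 i ≤ (5-1)*(3-1)) j
        (by rw [Finset.mem_Icc]; omega)
  · rcases le_or_gt 16 j with h | h
    · exact easy_case 4 4 j (by norm_num) (by norm_num) (by omega)
    · exact (by decide : ∀ i ∈ Finset.Icc (1:ℤ) 15, 2 * Phi 4 4 i ≤ (4-1)*(4-1)) j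
        (by rw [Finset.mem_Icc]; omega)

lemma key (t ℓ j : ℤ) (ht : 0 < t) (hl : 0 < ℓ) (hj : 0 < j) (htl : t ≤ ℓ)
    (h2 : ¬(t = 2 ∧ Even ℓ)) : 2 * Phi ℓ t j ≤ (ℓ - 1) * (t - 1) := by
  rcases (by omega : t = 1 ∨ t = 2 ∨ 3 ≤ t) with rfl | rfl | ht3
  · unfold Phi
    rw [show Finset.Icc (1:ℤ) 1 = {1} from by decide, Finset.sum_singleton]
    simp only [Int.ediv_one]
    have h1 : min j ℓ ≤ j := min_le_left _ _
    nlinarith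
  · have hodd : ¬ Even ℓ := fun he => h2 ⟨rfl, he⟩
    rw [Int.not_even_iff_odd] at hodd
    obtain ⟨k, hk⟩ := hodd
    unfold Phi
    rw [show Finset.Icc (1:ℤ) 2 = {1, 2} from by decide]
    rw [Finset.sum_insert (by decide), Finset.sum_singleton]
    have h1 : j / 1 = j := Int.ediv_one j
    have hdm : 2 * (j / 2) + j % 2 = j := Int.mul_ediv_add_emod j 2
    have hm0 : 0 ≤ j % 2 := Int.emod_nonneg j (by norm_num)
    have hm1 : j % 2 < 2 := Int.emod_lt_of_pos j (by norm_num)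
    rw [h1]
    omega
  · by_cases hsp : (t = 3 ∧ ℓ ≤ 5) ∨ (t = 4 ∧ ℓ ≤ 4)
    · apply special_case t ℓ j hj
      omega
    · push_neg at hsp
      exact lp_case t ℓ j ht3 hl hj htl (fun h3 => by omega) (fun h4 => by omega)

theorem stmt0 (t ℓ j : ℤ) (ht : 0 < t) (hℓ : 0 < ℓ) (hj : 0 < j)
    (h : ¬((t = 2 ∧ Even ℓ) ∨ (ℓ = 2 ∧ Even t))) :
    2 * Phi ℓ t j ≤ (ℓ - 1) * (t - 1) := by
  rcases le_total t ℓ with htl | hlt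
  · exact key t ℓ j ht hℓ hj htl (fun hc => h (Or.inl hc))
  · rw [Phi_symm t ℓ j ht hℓ hj.le]
    have hres := key ℓ t j hℓ ht hj hlt (fun hc => h (Or.inr hc))
    rw [show (ℓ-1)*(t-1) = (t-1)*(ℓ-1) from mul_comm _ _]
    exact hres
end

section
/- Let t, ℓ, and j be positive integers, and suppose one of t or ℓ equals 2 and the other is even. Then Φ_t(j) ≤ (1/2)·ℓ·(t−1), i.e., 2·Φ_t(j) ≤ ℓ(t−1). -/
theorem stmt1 (t ℓ j : ℤ) (ht : 0 < t) (hℓ : 0 < ℓ) (hj : 0 < j)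
    (h : (t = 2 ∧ Even ℓ) ∨ (ℓ = 2 ∧ Even t)) :
    2 * Phi ℓ t j ≤ ℓ * (t - 1) := by
  rcases h with ⟨ht2, _⟩ | ⟨hℓ2, _⟩
  · subst ht2
    have hIcc : Finset.Icc (1 : ℤ) 2 = {1, 2} := by decide
    rw [Phi, hIcc, Finset.sum_insert (by decide), Finset.sum_singleton]
    have h1 : j / 1 = j := Int.ediv_one j
    have h2 : 2 * (j / 2) ≤ j := by omega
    rw [h1]
    rcases le_total j ℓ with hc | hc <;> rcases le_total (j / 2) ℓ with hd | hd <;>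
      simp [min_eq_left, min_eq_right, hc, hd] <;> omega
  · subst hℓ2
    -- pointwise bound: min (j/b) 2 ≤ 1 + (if b ≤ j/2 then 1 else 0)
    have key : ∀ b ∈ Finset.Icc (1 : ℤ) t,
        min (j / b) 2 ≤ 1 + (if b ≤ j / 2 then (1 : ℤ) else 0) := by
      intro b hb
      simp only [Finset.mem_Icc] at hb
      split
      · have := min_le_right (j / b) (2 : ℤ)
        omega
      · rename_i hnb
        push_neg at hnb
        have hb0 : (0 : ℤ) < b := by omega
        have hjb : j < 2 * b := by omega
        have : j / b < 2 := by
          rw [Int.ediv_lt_iff_lt_mul hb0]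
          omega
        have := min_le_left (j / b) (2 : ℤ)
        omega
    have hsum : (∑ b ∈ Finset.Icc (1 : ℤ) t, min (j / b) 2) ≤
        ∑ b ∈ Finset.Icc (1 : ℤ) t, (1 + (if b ≤ j / 2 then (1 : ℤ) else 0)) :=
      Finset.sum_le_sum key
    have hsplit : ∑ b ∈ Finset.Icc (1 : ℤ) t, (1 + (if b ≤ j / 2 then (1 : ℤ) else 0))
        = (Finset.Icc (1 : ℤ) t).card
          + ((Finset.Icc (1 : ℤ) t).filter (fun b => b ≤ j / 2)).card := by
      rw [Finset.sum_add_distrib, Finset.sum_const, Finset.sum_boole]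
      ring
    have hcard1 : ((Finset.Icc (1 : ℤ) t).card : ℤ) = t := by
      rw [Int.card_Icc]
      omega
    have hsub : (Finset.Icc (1 : ℤ) t).filter (fun b => b ≤ j / 2)
        ⊆ Finset.Icc (1 : ℤ) (j / 2) := by
      intro b hb
      simp only [Finset.mem_filter, Finset.mem_Icc] at hb ⊢
      exact ⟨hb.1.1, hb.2⟩
    have hcard2 : (((Finset.Icc (1 : ℤ) t).filter (fun b => b ≤ j / 2)).card : ℤ)
        ≤ j / 2 := by
      have := Finset.card_le_card hsub
      have h2 : (Finset.Icc (1 : ℤ) (j / 2)).card = (j / 2 + 1 - 1).toNat := Int.card_Icc _ _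
      have hj2 : 0 ≤ j / 2 := by omega
      omega
    have hfin : (∑ b ∈ Finset.Icc (1 : ℤ) t, min (j / b) 2) ≤ t + j / 2 := by
      rw [hsplit] at hsum
      omega
    rw [Phi]
    have : j / 2 ≤ j - 1 := by omega
    omega
end

section
/- Let t, ℓ, and j be positive integers with 1 ≤ j < ℓ. Then Φ_t(j) ≤ (1/2)(ℓ−1)(t−1), i.e., 2·Φ_t(j) ≤ (ℓ−1)(t−1). -/
theorem stmt3 (t ℓ j : ℤ) (ht : 0 < t) (hℓ : 0 < ℓ) (hj : 1 ≤ j)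
    (hsmall : j < ℓ) :
    2 * Phi ℓ t j ≤ (ℓ - 1) * (t - 1) := by
  have hins : Finset.Icc (1 : ℤ) t = insert 1 (Finset.Icc 2 t) := by
    ext x; simp [Finset.mem_Icc]; omega
  have hnotmem : (1 : ℤ) ∉ Finset.Icc (2 : ℤ) t := by simp
  unfold Phi
  rw [hins, Finset.sum_insert hnotmem]
  have h1 : min (j / 1) ℓ = j := by
    rw [Int.ediv_one]; exact min_eq_left hsmall.le
  rw [h1]
  have hbound : ∀ b ∈ Finset.Icc (2 : ℤ) t, 2 * min (j / b) ℓ ≤ ℓ - 1 := by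
    intro b hb
    rw [Finset.mem_Icc] at hb
    have hmod : 0 ≤ j % b := Int.emod_nonneg j (by omega)
    have heq : b * (j / b) + j % b = j := Int.mul_ediv_add_emod j b
    have hq : 0 ≤ j / b := Int.ediv_nonneg (by omega) (by omega)
    have h2 : 2 * (j / b) ≤ j := by nlinarith
    have hmin : min (j / b) ℓ ≤ j / b := min_le_left _ _
    omega
  have hsum := Finset.sum_le_sum hbound
  rw [Finset.sum_const] at hsum
  have hcard : (Finset.Icc (2 : ℤ) t).card = (t - 1).toNat := by
    rw [Int.card_Icc]; congr 1; omega
  rw [hcard, nsmul_eq_mul] at hsum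
  have hc : ((t - 1).toNat : ℤ) = t - 1 := by omega
  rw [hc, ← Finset.mul_sum] at hsum
  linarith
end

section
/- Let t ≥ 3 and ℓ ≥ 3 be integers and let j be an integer with ℓ ≤ j < ℓt. Then Φ_t(j) ≤ (1/2)(ℓ−1)(t−1), i.e., 2·Φ_t(j) ≤ (ℓ−1)(t−1). -/
open Finset

/-- `Icc 1 n = Ioc 0 n` over `ℤ`. -/
lemma icc_eq_ioc (n : ℤ) : Finset.Icc (1 : ℤ) n = Finset.Ioc 0 n := by
  ext x
  simp only [Finset.mem_Icc, Finset.mem_Ioc]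
  omega

/-- Counting lemma: the number of positive `x ≤ n` with `x * c ≤ j` is `min (j/c) n`. -/
lemma chiInnerSum {j c n : ℤ} (hc : 0 < c) (hj : 0 ≤ j) (hn : 0 ≤ n) :
    (∑ x ∈ Finset.Ioc (0:ℤ) n, if x * c ≤ j then (1:ℤ) else 0) = min (j / c) n := by
  rw [Finset.sum_boole]
  have hfil : (Finset.Ioc (0:ℤ) n).filter (fun x => x * c ≤ j)
      = Finset.Ioc 0 (min (j / c) n) := by
    ext x
    simp only [Finset.mem_filter, Finset.mem_Ioc, le_min_iff]
    rw [Int.le_ediv_iff_mul_le hc]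
    tauto
  have h0 : 0 ≤ j / c := Int.ediv_nonneg hj hc.le
  rw [hfil, Int.card_Ioc]
  omega

/-- Double counting: column sums equal row sums. -/
lemma chiRowcol {j t ℓ : ℤ} (ht : 0 ≤ t) (hl : 0 ≤ ℓ) (hj : 0 ≤ j) :
    ∑ b ∈ Finset.Ioc (0:ℤ) t, min (j / b) ℓ = ∑ a ∈ Finset.Ioc (0:ℤ) ℓ, min (j / a) t := by
  have h1 : ∑ b ∈ Finset.Ioc (0:ℤ) t, min (j / b) ℓ
      = ∑ b ∈ Finset.Ioc (0:ℤ) t, ∑ a ∈ Finset.Ioc (0:ℤ) ℓ, if a * b ≤ j then (1:ℤ) else 0 := by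
    refine Finset.sum_congr rfl fun b hb => ?_
    rw [chiInnerSum (Finset.mem_Ioc.1 hb).1 hj hl]
  rw [h1, Finset.sum_comm]
  refine Finset.sum_congr rfl fun a ha => ?_
  rw [← chiInnerSum (Finset.mem_Ioc.1 ha).1 hj ht]
  refine Finset.sum_congr rfl fun b _ => ?_
  rw [mul_comm]


/-- Split a sum over `Ioc a c` (in `ℤ`) at `b`. -/
lemma sum_Ioc_split (f : ℤ → ℤ) {a b c : ℤ} (h1 : a ≤ b) (h2 : b ≤ c) :
    ∑ i ∈ Finset.Ioc a c, f i = (∑ i ∈ Finset.Ioc a b, f i) + ∑ i ∈ Finset.Ioc b c, f i := by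
  rw [← Finset.Ioc_union_Ioc_eq_Ioc h1 h2, Finset.sum_union]
  rw [Finset.disjoint_left]
  intro x hx hx'
  rw [Finset.mem_Ioc] at hx hx'
  omega


/-- The key polynomial inequality for the middle case. -/
lemma star_ineq {m t ℓ j : ℤ} (hl4 : 4 ≤ ℓ) (ht : 3 ≤ t) (hm2 : 2 ≤ m)
    (hC : ℓ ≤ 2 * m) (hmub : m ≤ ℓ - 2) (hmle : m * (t + 1) ≤ j)
    (h44 : ¬(ℓ = 4 ∧ t = 3)) :
    2 * ((m+1) * ℓ) * (m * (t+1) - j) + j * ((ℓ - m) * (ℓ + m + 1))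
      ≤ (m+1) * ℓ * ((ℓ - 1) * t) := by
  have hc : 0 < m^2 + m + ℓ + ℓ * (2*m - ℓ) := by
    have h1 : 0 ≤ ℓ * (2*m - ℓ) := mul_nonneg (by omega) (by omega)
    nlinarith [sq_nonneg m]
  have hjc : 0 ≤ (m^2 + m + ℓ + ℓ * (2*m - ℓ)) * (j - m * (t+1)) :=
    mul_nonneg hc.le (by omega)
  have hG : 0 ≤ (ℓ^2 - (2*m+1) * ℓ + m^2 * (m+1)) * (t+1) - (m+1) * ℓ * (ℓ - 1) := by
    rcases le_or_gt 3 m with hm3 | hm3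
    · have h4A : (m+1) * ℓ * (ℓ - 1) ≤ 4 * (ℓ^2 - (2*m+1) * ℓ + m^2 * (m+1)) := by
        have hid : 4 * (ℓ^2 - (2*m+1) * ℓ + m^2 * (m+1)) - (m+1) * ℓ * (ℓ - 1)
            = (m-3) * ((2*m-ℓ) * (2*m+ℓ)) + (7*m+3) * (2*m-ℓ) + 2*m*(m-3) := by
          ring
        have p1 : 0 ≤ (m-3) * ((2*m-ℓ) * (2*m+ℓ)) :=
          mul_nonneg (by omega) (mul_nonneg (by omega) (by omega))
        have p2 : 0 ≤ (7*m+3) * (2*m-ℓ) := mul_nonneg (by omega) (by omega)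
        have p3 : 0 ≤ 2*m*(m-3) := mul_nonneg (by omega) (by omega)
        linarith
      have hpos : 0 ≤ (m+1) * ℓ * (ℓ - 1) :=
        mul_nonneg (mul_nonneg (by omega) (by omega)) (by omega)
      have hA0 : 0 ≤ ℓ^2 - (2*m+1) * ℓ + m^2 * (m+1) := by linarith
      have hstep : 0 ≤ (ℓ^2 - (2*m+1) * ℓ + m^2 * (m+1)) * ((t+1) - 4) :=
        mul_nonneg hA0 (by omega)
      nlinarith [hstep]
    · have hm2' : m = 2 := by omega
      have hle : ℓ = 4 := by omega
      have ht5 : 4 ≤ t := by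
        rcases lt_or_ge t 4 with h | h
        · exact absurd ⟨hle, by omega⟩ h44
        · exact h
      subst hm2'; subst hle
      linarith
  have hid2 : (m+1) * ℓ * ((ℓ - 1) * t)
      - (2 * ((m+1) * ℓ) * (m * (t+1) - j) + j * ((ℓ - m) * (ℓ + m + 1)))
      = (m^2 + m + ℓ + ℓ * (2*m - ℓ)) * (j - m * (t+1))
        + ((ℓ^2 - (2*m+1) * ℓ + m^2 * (m+1)) * (t+1) - (m+1) * ℓ * (ℓ - 1)) := by
    ring
  linarith

lemma phi_ioc (ℓ t j : ℤ) : Phi ℓ t j = (∑ b ∈ Finset.Ioc (0:ℤ) t, min (j / b) ℓ) - j := by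
  rw [Phi, icc_eq_ioc]

/-- Bound a sum of `min`s by a constant. -/
lemma sum_min_le {j ℓ n : ℤ} (hn : 0 ≤ n) :
    ∑ b ∈ Finset.Ioc (0:ℤ) n, min (j / b) ℓ ≤ n * ℓ := by
  calc ∑ b ∈ Finset.Ioc (0:ℤ) n, min (j / b) ℓ ≤ ∑ _b ∈ Finset.Ioc (0:ℤ) n, ℓ :=
        Finset.sum_le_sum fun b _ => min_le_right _ _
    _ = ((Finset.Ioc (0:ℤ) n).card : ℤ) * ℓ := by rw [Finset.sum_const, nsmul_eq_mul]
    _ = n * ℓ := by rw [Int.card_Ioc, Int.toNat_of_nonneg (by omega)]; ring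

/-- The top case: if `(t-1) * ℓ ≤ j < t * ℓ`. -/
lemma topcase {j t ℓ : ℤ} (ht : 1 ≤ t) (hl : 0 ≤ ℓ) (h2 : j < t * ℓ) :
    ∑ b ∈ Finset.Ioc (0:ℤ) t, min (j / b) ℓ ≤ (t - 1) * ℓ + (ℓ - 1) := by
  rw [sum_Ioc_split (fun b : ℤ => min (j / b) ℓ) (show (0:ℤ) ≤ t - 1 by omega) (show t - 1 ≤ t by omega)]
  have hsingle : Finset.Ioc (t-1) t = {t} := by
    ext x
    simp only [Finset.mem_Ioc, Finset.mem_singleton]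
    omega
  rw [hsingle, Finset.sum_singleton]
  have hA : ∑ b ∈ Finset.Ioc (0:ℤ) (t-1), min (j / b) ℓ ≤ (t - 1) * ℓ := sum_min_le (by omega)
  have hB : j / t < ℓ := (Int.ediv_lt_iff_lt_mul (by omega)).2 (by linarith)
  have hB' : min (j / t) ℓ ≤ j / t := min_le_left _ _
  omega

lemma base_lemma : ∀ ℓ j : ℤ, 3 ≤ ℓ → ℓ ≤ j → j < ℓ * 3 →
    2 * Phi ℓ 3 j ≤ (ℓ - 1) * (3 - 1) := by
    intro ℓ j hl hj1 hj2
    have hicc : Finset.Icc (1:ℤ) 3 = {1, 2, 3} := by decide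
    have h1 : Phi ℓ 3 j = min (j / 1) ℓ + min (j / 2) ℓ + min (j / 3) ℓ - j := by
      rw [Phi, hicc]
      rw [show ({1, 2, 3} : Finset ℤ) = insert 1 (insert 2 {3}) from rfl]
      rw [Finset.sum_insert (by decide), Finset.sum_insert (by decide), Finset.sum_singleton]
      ring
    rw [h1]
    have : j / 1 = j := Int.ediv_one j
    rw [this]
    omega
lemma step_lemma (t : ℤ) (ht : 3 ≤ t)
    (IH : ∀ ℓ j : ℤ, 3 ≤ ℓ → ℓ ≤ j → j < ℓ * t → 2 * Phi ℓ t j ≤ (ℓ - 1) * (t - 1)) :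
    ∀ ℓ j : ℤ, 3 ≤ ℓ → ℓ ≤ j → j < ℓ * (t + 1) →
    2 * Phi ℓ (t+1) j ≤ (ℓ - 1) * (t + 1 - 1) := by
    intro ℓ j hl hj1 hj2
    have htpos : (0:ℤ) < t + 1 := by omega
    have hj0 : (0:ℤ) ≤ j := by omega
    -- Case A : j ≥ t * ℓ
    by_cases hA : t * ℓ ≤ j
    · have htop := topcase (j := j) (t := t + 1) (ℓ := ℓ) (by omega) (by omega)
        (by linarith [hj2])
      have hphi : Phi ℓ (t+1) j = (∑ b ∈ Finset.Ioc (0:ℤ) (t+1), min (j / b) ℓ) - j :=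
        phi_ioc ℓ (t+1) j
      nlinarith [mul_nonneg (show (0:ℤ) ≤ ℓ - 3 by omega) (show (0:ℤ) ≤ t - 2 by omega)]
    push_neg at hA
    -- set m
    set m := j / (t + 1) with hm
    have hm0 : 0 ≤ m := Int.ediv_nonneg hj0 htpos.le
    have hmle : m * (t + 1) ≤ j := Int.ediv_mul_le j (by omega)
    have hmgt : j < (m + 1) * (t + 1) := Int.lt_ediv_add_one_mul_self j htpos
    -- split off the last term of Phi
    have hsplit : Phi ℓ (t+1) j = Phi ℓ t j + min (j / (t+1)) ℓ := by
      rw [phi_ioc, phi_ioc,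
        sum_Ioc_split (fun b : ℤ => min (j / b) ℓ)
          (show (0:ℤ) ≤ t by omega) (show t ≤ t + 1 by omega)]
      have hsingle : Finset.Ioc t (t+1) = {t+1} := by
        ext x
        simp only [Finset.mem_Ioc, Finset.mem_singleton]
        omega
      rw [hsingle, Finset.sum_singleton]
      ring
    by_cases hC : 2 * m ≤ ℓ - 1
    · -- recurse on t
      have hrec := IH ℓ j hl hj1 (by linarith [hA])
      have hminle : min (j / (t+1)) ℓ ≤ m := min_le_left _ _
      rw [hsplit]
      nlinarith [hrec, hminle]
    push_neg at hC
    -- Case B : j ≥ (ℓ - 1) * (t + 1)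
    by_cases hB : (ℓ - 1) * (t + 1) ≤ j
    · have hrow : Phi ℓ (t+1) j = (∑ a ∈ Finset.Ioc (0:ℤ) ℓ, min (j / a) (t+1)) - j := by
        rw [phi_ioc, chiRowcol (by omega) (by omega) hj0]
      have htop := topcase (j := j) (t := ℓ) (ℓ := t + 1) (by omega) (by omega)
        (by linarith [hj2])
      nlinarith [mul_nonneg (show (0:ℤ) ≤ ℓ - 3 by omega) (show (0:ℤ) ≤ t - 2 by omega)]
    push_neg at hB
    -- now 2m ≥ ℓ, m ≤ ℓ - 2
    have hmub : m < ℓ - 1 := by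
      have := (Int.ediv_lt_iff_lt_mul htpos).2 hB
      omega
    have hl4 : 4 ≤ ℓ := by omega
    have hm2 : 2 ≤ m := by omega
    by_cases h44 : ℓ = 4 ∧ t = 3
    · obtain ⟨he1, he2⟩ := h44
      subst he1; subst he2
      have hub : j < 16 := by omega
      interval_cases j <;> decide
    · -- main convexity case
      -- row form
      have hrow : Phi ℓ (t+1) j = (∑ a ∈ Finset.Ioc (0:ℤ) ℓ, min (j / a) (t+1)) - j := by
        rw [phi_ioc, chiRowcol (by omega) (by omega) hj0]
      -- split the row sum at m
      have hsplit2 : ∑ a ∈ Finset.Ioc (0:ℤ) ℓ, min (j / a) (t+1)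
          = (∑ a ∈ Finset.Ioc (0:ℤ) m, min (j / a) (t+1))
            + ∑ a ∈ Finset.Ioc m ℓ, min (j / a) (t+1) :=
        sum_Ioc_split (fun a : ℤ => min (j / a) (t+1)) (by omega) (by omega)
      -- rows 1..m are full
      have hfull : ∑ a ∈ Finset.Ioc (0:ℤ) m, min (j / a) (t+1)
          = m * (t + 1) := by
        have heach : ∀ a ∈ Finset.Ioc (0:ℤ) m, min (j / a) (t+1) = t + 1 := by
          intro a ha
          rw [Finset.mem_Ioc] at ha
          have h1 : (t + 1) * a ≤ j := by
            calc (t+1) * a ≤ (t+1) * m := by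
                  exact mul_le_mul_of_nonneg_left ha.2 htpos.le
              _ = m * (t+1) := by ring
              _ ≤ j := hmle
          have h2 : t + 1 ≤ j / a := (Int.le_ediv_iff_mul_le ha.1).2 h1
          omega
        rw [Finset.sum_congr rfl heach, Finset.sum_const, nsmul_eq_mul, Int.card_Ioc]
        rw [Int.toNat_of_nonneg (by omega)]
        ring
      -- rows m+1..ℓ are partial
      have hpart : ∑ a ∈ Finset.Ioc m ℓ, min (j / a) (t+1)
          = ∑ a ∈ Finset.Ioc m ℓ, j / a := by
        refine Finset.sum_congr rfl fun a ha => ?_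
        rw [Finset.mem_Ioc] at ha
        have ha0 : 0 < a := by omega
        have h1 : j < (t+1) * a := by
          calc j < (m+1) * (t+1) := hmgt
            _ ≤ a * (t+1) := mul_le_mul_of_nonneg_right (by omega) htpos.le
            _ = (t+1) * a := by ring
        have h2 : j / a < t + 1 := (Int.ediv_lt_iff_lt_mul ha0).2 h1
        omega
      -- chord bound, summed
      have hchord : (m+1) * ℓ * (∑ a ∈ Finset.Ioc m ℓ, j / a)
          ≤ (∑ a ∈ Finset.Ioc m ℓ, (m + 1 + ℓ - a)) * j := by
        rw [Finset.mul_sum, Finset.sum_mul]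
        refine Finset.sum_le_sum fun a ha => ?_
        rw [Finset.mem_Ioc] at ha
        have ha0 : 0 < a := by omega
        have hd0 : 0 ≤ j / a := Int.ediv_nonneg hj0 ha0.le
        have hda : j / a * a ≤ j := Int.ediv_mul_le j (by omega)
        have hkey : (m+1) * ℓ ≤ a * (m + 1 + ℓ - a) := by
          nlinarith [mul_nonneg (show (0:ℤ) ≤ a - (m+1) by omega)
            (show (0:ℤ) ≤ ℓ - a by omega)]
        calc (m+1) * ℓ * (j / a) ≤ a * (m + 1 + ℓ - a) * (j / a) :=
              mul_le_mul_of_nonneg_right hkey hd0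
          _ = (m + 1 + ℓ - a) * (j / a * a) := by ring
          _ ≤ (m + 1 + ℓ - a) * j := mul_le_mul_of_nonneg_left hda (by omega)
      -- Gauss : 2 * ∑ (m+1+ℓ-a) = (ℓ-m) * (ℓ+m+1)
      have hbij : ∑ a ∈ Finset.Ioc m ℓ, (m + 1 + ℓ - a) = ∑ a ∈ Finset.Ioc m ℓ, a := by
        refine Finset.sum_nbij' (fun a => m + 1 + ℓ - a) (fun a => m + 1 + ℓ - a) ?_ ?_ ?_ ?_ ?_ <;>
          intro a ha <;> simp only [Finset.mem_Ioc] at * <;> omega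
      have hgauss : 2 * (∑ a ∈ Finset.Ioc m ℓ, (m + 1 + ℓ - a)) = (ℓ - m) * (ℓ + m + 1) := by
        have h2 : (∑ a ∈ Finset.Ioc m ℓ, (m + 1 + ℓ - a)) + ∑ a ∈ Finset.Ioc m ℓ, a
            = ∑ a ∈ Finset.Ioc m ℓ, (m + 1 + ℓ) := by
          rw [← Finset.sum_add_distrib]
          refine Finset.sum_congr rfl fun a _ => by ring
        rw [Finset.sum_const, nsmul_eq_mul, Int.card_Ioc,
          Int.toNat_of_nonneg (by omega)] at h2
        have := hbij
        nlinarith [h2, this]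
      -- put it together
      set S := ∑ a ∈ Finset.Ioc m ℓ, j / a with hS
      set P := ∑ a ∈ Finset.Ioc m ℓ, (m + 1 + ℓ - a) with hP
      have hphi2 : Phi ℓ (t+1) j = m * (t+1) + S - j := by
        rw [hrow, hsplit2, hfull, hpart]
      -- key bound : 2 (m+1) ℓ Phi ≤ 2 (m+1) ℓ (m(t+1) - j) + j (ℓ-m)(ℓ+m+1)
      have hmain : 2 * ((m+1) * ℓ) * Phi ℓ (t+1) j
          ≤ 2 * ((m+1) * ℓ) * (m * (t+1) - j) + j * ((ℓ - m) * (ℓ + m + 1)) := by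
        rw [hphi2]
        have h1 : 2 * ((m+1) * ℓ * S) ≤ 2 * (P * j) := by linarith [hchord]
        have h2 : 2 * (P * j) = (ℓ - m) * (ℓ + m + 1) * j := by
          rw [show 2 * (P * j) = (2 * P) * j by ring, hgauss]
        linarith [h1, h2]
      -- the polynomial inequality
      have hstar : 2 * ((m+1) * ℓ) * (m * (t+1) - j) + j * ((ℓ - m) * (ℓ + m + 1))
          ≤ (m+1) * ℓ * ((ℓ - 1) * t) :=
        star_ineq (by omega) (by omega) (by omega) (by omega) (by omega) hmle h44
      have hpos : 0 < (m+1) * ℓ := by positivity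
      have hfin : 2 * ((m+1) * ℓ) * Phi ℓ (t+1) j ≤ (m+1) * ℓ * ((ℓ - 1) * t) :=
        le_trans hmain hstar
      have : ((m+1) * ℓ) * (2 * Phi ℓ (t+1) j) ≤ ((m+1) * ℓ) * ((ℓ - 1) * t) := by
        linarith [hfin]
      have hdiv := (mul_le_mul_iff_right₀ hpos).1 this
      linarith [hdiv]

lemma main_lemma : ∀ t : ℤ, 3 ≤ t → ∀ ℓ j : ℤ, 3 ≤ ℓ → ℓ ≤ j → j < ℓ * t →
    2 * Phi ℓ t j ≤ (ℓ - 1) * (t - 1) := by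
  have key : ∀ n : ℕ, ∀ ℓ j : ℤ, 3 ≤ ℓ → ℓ ≤ j → j < ℓ * (3 + (n:ℤ)) →
      2 * Phi ℓ (3 + (n:ℤ)) j ≤ (ℓ - 1) * (3 + (n:ℤ) - 1) := by
    intro n
    induction n with
    | zero => simpa using base_lemma
    | succ n ih =>
      have hcast : (3 + ((n+1 : ℕ) : ℤ)) = (3 + (n:ℤ)) + 1 := by push_cast; ring
      rw [hcast]
      exact step_lemma (3 + (n:ℤ)) (by omega) ih
  intro t ht ℓ j hl hj1 hj2
  obtain ⟨n, rfl⟩ : ∃ n : ℕ, t = 3 + (n:ℤ) := ⟨(t-3).toNat, by omega⟩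
  exact key n ℓ j hl hj1 hj2

theorem stmt8 (t ℓ j : ℤ) (ht : 3 ≤ t) (hℓ : 3 ≤ ℓ)
    (hj1 : ℓ ≤ j) (hj2 : j < ℓ * t) :
    2 * Phi ℓ t j ≤ (ℓ - 1) * (t - 1) := by
  exact main_lemma t ht ℓ j hℓ hj1 hj2
end

section
/- Let ℓ and t be positive integers and let d = (d_1, d_2, …, d_{ℓt}) be the non-decreasing rearrangement of the multiset of products {a·b : 1 ≤ a ≤ ℓ, 1 ≤ b ≤ t} (counted with multiplicity). Then 2·S(d) ≤ ℓ(t−1); moreover, if it is not the case that one of t or ℓ equals 2 while the other is even, then 2·S(d) ≤ (ℓ−1)(t−1). -/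
/-- For an integer vector `v = (v_1, …, v_m)` (as a list),
`S(v) = max(0, 1 − v_1, 2 − v_2, …, m − v_m)`. -/

def S (v : List ℤ) : ℤ :=
  (((List.range v.length)).map (fun i => (((i : ℕ) + 1 : ℕ) : ℤ) - v.getD i 0)).foldr max 0

def cb (ℓ t C : ℕ) : Prop :=
  ∀ n : ℕ, (((Finset.Icc 1 ℓ) ×ˢ (Finset.Icc 1 t)).filter (fun p => p.1 * p.2 ≤ n)).card ≤ n + C

lemma foldr_max_le {l : List ℤ} {c : ℤ} (h0 : 0 ≤ c) (h : ∀ x ∈ l, x ≤ c) :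
    l.foldr max 0 ≤ c := by
  induction l with
  | nil => simpa
  | cons a l ih =>
    simp only [List.foldr_cons, max_le_iff]
    exact ⟨h a (by simp), ih fun x hx => h x (by simp [hx])⟩

lemma S_le_of_cb (ℓ t C : ℕ) (h : cb ℓ t C) :
    S (((Finset.Icc 1 ℓ ×ˢ Finset.Icc 1 t).val.map
        (fun p => ((p.1 * p.2 : ℕ) : ℤ))).sort (· ≤ ·)) ≤ (C : ℤ) := by
  set M := (Finset.Icc 1 ℓ ×ˢ Finset.Icc 1 t).val.map (fun p => ((p.1 * p.2 : ℕ) : ℤ)) with hM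
  set v := M.sort (· ≤ ·) with hv
  have hvM : (v : Multiset ℤ) = M := Multiset.sort_eq _ _
  have hsorted : v.Pairwise (· ≤ ·) := Multiset.pairwise_sort _ _
  unfold S
  apply foldr_max_le (by positivity)
  intro x hx
  simp only [List.mem_map, List.mem_range] at hx
  obtain ⟨i, hi, rfl⟩ := hx
  rw [List.getD_eq_getElem v 0 hi]
  have hmem : v[i] ∈ M := by
    rw [← hvM]
    exact_mod_cast List.getElem_mem hi
  simp only [hM, Multiset.mem_map] at hmem
  obtain ⟨p, hp, hpe⟩ := hmem
  set m := p.1 * p.2 with hm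
  have hcount : i + 1 ≤ (v.filter (fun x => x ≤ v[i])).length := by
    have htake : (v.take (i+1)).filter (fun x => x ≤ v[i]) = v.take (i+1) := by
      apply List.filter_eq_self.mpr
      intro x hx
      obtain ⟨j, hj, rfl⟩ := List.mem_take_iff_getElem.mp hx
      simp only [decide_eq_true_eq]
      exact hsorted.rel_get_of_le (by simp; omega)
    have hsub : List.Sublist ((v.take (i+1)).filter (fun x => x ≤ v[i]))
        (v.filter (fun x => x ≤ v[i])) := (List.take_sublist _ _).filter _
    have := hsub.length_le
    rwa [htake, List.length_take, min_eq_left (by omega)] at this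
  have hcard : ((v.filter (fun x => x ≤ v[i])).length : ℕ)
      = (((Finset.Icc 1 ℓ) ×ˢ (Finset.Icc 1 t)).filter (fun p => p.1 * p.2 ≤ m)).card := by
    have h1 : ((v.filter (fun x => x ≤ v[i]) : List ℤ) : Multiset ℤ)
        = M.filter (fun x => x ≤ v[i]) := by
      rw [← hvM]; simp
    have h2 : ((v.filter (fun x => x ≤ v[i]) : List ℤ) : Multiset ℤ).card
        = (v.filter (fun x => x ≤ v[i])).length := by simp
    rw [← h2, h1, hM, Multiset.filter_map]
    rw [Multiset.card_map]
    congr 1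
    apply Multiset.filter_congr
    intro q hq
    rw [← hpe]
    push_cast [Function.comp, hm]; exact_mod_cast Iff.rfl
  have h3 : i + 1 ≤ m + C := by
    rw [hcard] at hcount
    exact le_trans hcount (h m)
  rw [← hpe]
  push_cast
  omega

lemma cb_swap {ℓ t C : ℕ} (h : cb ℓ t C) : cb t ℓ C := by
  intro n
  have := h n
  rw [show (((Finset.Icc 1 t) ×ˢ (Finset.Icc 1 ℓ)).filter (fun p => p.1 * p.2 ≤ n)).card
      = (((Finset.Icc 1 ℓ) ×ˢ (Finset.Icc 1 t)).filter (fun p => p.1 * p.2 ≤ n)).card from ?_]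
  · exact this
  · apply Finset.card_bij (fun p _ => Prod.swap p)
    · intro p hp
      simp only [Finset.mem_filter, Finset.mem_product] at *
      constructor
      · exact ⟨hp.1.2, hp.1.1⟩
      · simpa [mul_comm] using hp.2
    · intro p hp q hq hpq
      exact Prod.swap_injective hpq
    · intro p hp
      refine ⟨Prod.swap p, ?_, by simp⟩
      simp only [Finset.mem_filter, Finset.mem_product] at *
      exact ⟨⟨hp.1.2, hp.1.1⟩, by simpa [mul_comm] using hp.2⟩

lemma cb_of_inj (ℓ t C : ℕ) (T : Finset (ℕ × ℕ)) (φ : ℕ × ℕ → ℕ)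
    (hT : T ⊆ (Finset.Icc 1 ℓ) ×ˢ (Finset.Icc 1 t))
    (hcard : ((Finset.Icc 1 ℓ) ×ˢ (Finset.Icc 1 t)).card ≤ T.card + C)
    (hφ : ∀ p ∈ T, 1 ≤ φ p ∧ φ p ≤ p.1 * p.2)
    (hinj : Set.InjOn φ T) : cb ℓ t C := by
  intro n
  set P := (Finset.Icc 1 ℓ) ×ˢ (Finset.Icc 1 t) with hP
  have hsplit : (P.filter (fun p => p.1 * p.2 ≤ n))
      ⊆ (T.filter (fun p => p.1 * p.2 ≤ n)) ∪ (P \ T) := by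
    intro p hp
    simp only [Finset.mem_filter, Finset.mem_union, Finset.mem_sdiff] at *
    by_cases hpT : p ∈ T
    · exact Or.inl ⟨hpT, hp.2⟩
    · exact Or.inr ⟨hp.1, hpT⟩
  calc (P.filter (fun p => p.1 * p.2 ≤ n)).card
      ≤ ((T.filter (fun p => p.1 * p.2 ≤ n)) ∪ (P \ T)).card := Finset.card_le_card hsplit
    _ ≤ (T.filter (fun p => p.1 * p.2 ≤ n)).card + (P \ T).card := Finset.card_union_le _ _
    _ ≤ n + C := by
        have h1 : (T.filter (fun p => p.1 * p.2 ≤ n)).card ≤ (Finset.Icc 1 n).card := by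
          apply Finset.card_le_card_of_injOn φ
          · intro p hp
            simp only [Finset.mem_coe, Finset.mem_filter] at hp
            have := hφ p hp.1
            simp only [Finset.mem_coe, Finset.mem_Icc]
            exact ⟨this.1, le_trans this.2 hp.2⟩
          · exact hinj.mono (by intro p hp; simp only [Finset.mem_coe, Finset.mem_filter] at hp; exact hp.1)
        have h2 : (P \ T).card ≤ C := by
          rw [Finset.card_sdiff_of_subset hT]
          omega
        simp only [Nat.card_Icc] at h1
        omega

lemma mul_ge_succ {k k' c : ℕ} (h : k < k') : k * c + c ≤ k' * c := by
  calc k * c + c = (k + 1) * c := by ring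
    _ ≤ k' * c := Nat.mul_le_mul_right c h

lemma cb1 (m q : ℕ) : cb (m+1) (2*q+1) (m*q) := by
  set t := 2*q+1 with hts
  apply cb_of_inj _ _ _
    (({1} ×ˢ Finset.Icc 1 t) ∪ (Finset.Icc 2 (m+1) ×ˢ Finset.Icc (q+1) t))
    (fun p => if p.1 = 1 then p.2 else p.2 + (p.1 - 1) * (q+1))
  · intro p hp
    simp only [Finset.mem_union, Finset.mem_product, Finset.mem_Icc, Finset.mem_singleton] at hp ⊢
    omega
  · have hdisj : Disjoint ({1} ×ˢ Finset.Icc 1 t) (Finset.Icc 2 (m+1) ×ˢ Finset.Icc (q+1) t) := by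
      rw [Finset.disjoint_left]
      intro p hp hp'
      simp only [Finset.mem_product, Finset.mem_Icc, Finset.mem_singleton] at hp hp'
      omega
    rw [Finset.card_union_of_disjoint hdisj]
    simp only [Finset.card_product, Finset.card_singleton, Nat.card_Icc]
    have hc : t + 1 - 1 = 2*q+1 := by omega
    have hc2 : t + 1 - (q+1) = q + 1 := by omega
    have hc3 : m + 1 + 1 - 1 = m + 1 := by omega
    have hc4 : m + 1 + 1 - 2 = m := by omega
    rw [hc, hc2, hc3, hc4]
    exact le_of_eq (by ring)
  · intro p hp
    simp only [Finset.mem_union, Finset.mem_product, Finset.mem_Icc, Finset.mem_singleton] at hp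
    rcases hp with ⟨h1, hb⟩ | ⟨ha, hb⟩
    · rw [if_pos h1]
      exact ⟨hb.1, by rw [h1, one_mul]⟩
    · rw [if_neg (by omega)]
      obtain ⟨k, hk⟩ : ∃ k, p.1 = k + 2 := ⟨p.1 - 2, by omega⟩
      have hs : p.1 - 1 = k + 1 := by omega
      rw [hs]
      have : (k+1) * (q+1) ≤ (k+1) * p.2 := Nat.mul_le_mul_left _ (by omega)
      constructor
      · omega
      · have : p.2 + (k+1) * (q+1) ≤ p.2 + (k+1) * p.2 := by omega
        calc p.2 + (k+1)*(q+1) ≤ p.2 + (k+1)*p.2 := this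
          _ = (k+2) * p.2 := by ring
          _ = p.1 * p.2 := by rw [hk]
  · intro p hp p' hp' he
    simp only [Finset.coe_union, Set.mem_union, Finset.coe_product, Set.mem_prod,
      Finset.mem_coe, Finset.mem_Icc, Finset.mem_singleton, Finset.coe_singleton,
      Set.mem_singleton_iff] at hp hp'
    simp only at he
    rcases hp with ⟨h1, hb⟩ | ⟨ha, hb⟩ <;> rcases hp' with ⟨h1', hb'⟩ | ⟨ha', hb'⟩
    · rw [if_pos h1, if_pos h1'] at he
      exact Prod.ext (h1.trans h1'.symm) he
    · exfalso
      rw [if_pos h1, if_neg (by omega)] at he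
      obtain ⟨k, hk⟩ : ∃ k, p'.1 = k + 2 := ⟨p'.1 - 2, by omega⟩
      have hs : p'.1 - 1 = k + 1 := by omega
      rw [hs] at he
      have : q + 1 ≤ (k+1) * (q+1) := Nat.le_mul_of_pos_left _ (by omega)
      omega
    · exfalso
      rw [if_neg (by omega), if_pos h1'] at he
      obtain ⟨k, hk⟩ : ∃ k, p.1 = k + 2 := ⟨p.1 - 2, by omega⟩
      have hs : p.1 - 1 = k + 1 := by omega
      rw [hs] at he
      have : q + 1 ≤ (k+1) * (q+1) := Nat.le_mul_of_pos_left _ (by omega)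
      omega
    · rw [if_neg (by omega), if_neg (by omega)] at he
      obtain ⟨k, hk⟩ : ∃ k, p.1 = k + 2 := ⟨p.1 - 2, by omega⟩
      obtain ⟨k', hk'⟩ : ∃ k', p'.1 = k' + 2 := ⟨p'.1 - 2, by omega⟩
      rw [show p.1 - 1 = k + 1 from by omega, show p'.1 - 1 = k' + 1 from by omega] at he
      have e1 : (k+1)*(q+1) = k*(q+1)+(q+1) := by ring
      have e2 : (k'+1)*(q+1) = k'*(q+1)+(q+1) := by ring
      have hkk : k = k' := by
        rcases lt_trichotomy k k' with h | h | h
        · exfalso; have := mul_ge_succ (k := k) (k' := k') (c := q+1) h; omega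
        · exact h
        · exfalso; have := mul_ge_succ (k := k') (k' := k) (c := q+1) h; omega
      subst hkk
      have : p.2 = p'.2 := by omega
      exact Prod.ext (by omega) this

lemma cb3 (m : ℕ) : cb (2*(m+1)) 2 (m+1) := by
  apply cb_of_inj _ _ _
    ((Finset.Icc 1 (2*(m+1)) ×ˢ {2}) ∪ (Finset.Icc (m+2) (2*(m+1)) ×ˢ {1}))
    (fun p => if p.2 = 2 then 2*p.1 else 2*p.1 - (2*m+3))
  · intro p hp
    simp only [Finset.mem_union, Finset.mem_product, Finset.mem_Icc, Finset.mem_singleton] at hp ⊢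
    omega
  · have hdisj : Disjoint (Finset.Icc 1 (2*(m+1)) ×ˢ ({2} : Finset ℕ))
        (Finset.Icc (m+2) (2*(m+1)) ×ˢ {1}) := by
      rw [Finset.disjoint_left]
      intro p hp hp'
      simp only [Finset.mem_product, Finset.mem_Icc, Finset.mem_singleton] at hp hp'
      omega
    rw [Finset.card_union_of_disjoint hdisj]
    simp only [Finset.card_product, Finset.card_singleton, Nat.card_Icc]
    omega
  · intro p hp
    simp only [Finset.mem_union, Finset.mem_product, Finset.mem_Icc, Finset.mem_singleton] at hp
    rcases hp with ⟨ha, hb⟩ | ⟨ha, hb⟩ <;> simp [hb] <;> omega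
  · intro p hp p' hp' he
    obtain ⟨a, b⟩ := p
    obtain ⟨a', b'⟩ := p'
    simp only [Finset.coe_union, Set.mem_union, Finset.coe_product, Set.mem_prod,
      Finset.mem_coe, Finset.mem_Icc, Finset.mem_singleton, Finset.coe_singleton,
      Set.mem_singleton_iff] at hp hp'
    rcases hp with ⟨ha, hb⟩ | ⟨ha, hb⟩ <;> rcases hp' with ⟨ha', hb'⟩ | ⟨ha', hb'⟩ <;>
      subst hb <;> subst hb' <;> simp_all <;> omega

lemma cb4 (s : ℕ) : cb 2 (2*(s+1)) (s+1) := by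
  apply cb_of_inj _ _ _
    (({1} ×ˢ Finset.Icc 1 (2*(s+1))) ∪ ({2} ×ˢ Finset.Icc (s+2) (2*(s+1))))
    (fun p => if p.1 = 1 then p.2 else p.2 + (s+1))
  · intro p hp
    simp only [Finset.mem_union, Finset.mem_product, Finset.mem_Icc, Finset.mem_singleton] at hp ⊢
    omega
  · have hdisj : Disjoint (({1} : Finset ℕ) ×ˢ Finset.Icc 1 (2*(s+1)))
        ({2} ×ˢ Finset.Icc (s+2) (2*(s+1))) := by
      rw [Finset.disjoint_left]
      intro p hp hp'
      simp only [Finset.mem_product, Finset.mem_Icc, Finset.mem_singleton] at hp hp'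
      omega
    rw [Finset.card_union_of_disjoint hdisj]
    simp only [Finset.card_product, Finset.card_singleton, Nat.card_Icc]
    omega
  · intro p hp
    simp only [Finset.mem_union, Finset.mem_product, Finset.mem_Icc, Finset.mem_singleton] at hp
    rcases hp with ⟨ha, hb⟩ | ⟨ha, hb⟩ <;> simp [ha] <;> omega
  · intro p hp p' hp' he
    obtain ⟨a, b⟩ := p
    obtain ⟨a', b'⟩ := p'
    simp only [Finset.coe_union, Set.mem_union, Finset.coe_product, Set.mem_prod,
      Finset.mem_coe, Finset.mem_Icc, Finset.mem_singleton, Finset.coe_singleton,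
      Set.mem_singleton_iff] at hp hp'
    rcases hp with ⟨ha, hb⟩ | ⟨ha, hb⟩ <;> rcases hp' with ⟨ha', hb'⟩ | ⟨ha', hb'⟩ <;>
      subst ha <;> subst ha' <;> simp_all <;> omega

lemma cb2 (A B : ℕ) : cb (2*(A+2)) (2*(B+2)) (2*A*B + 3*A + 3*B + 4) := by
  apply cb_of_inj _ _ _
    ((({1} ×ˢ Finset.Icc 1 (2*(B+2))) ∪
      (Finset.Icc 2 (2*(A+2)) ×ˢ Finset.Icc (B+3) (2*(B+2)))) ∪
      (Finset.Icc (A+3) (2*(A+2)) ×ˢ {B+2}))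
    (fun p => if p.1 = 1 then p.2 else if p.2 = B+2 then (p.1 - (A+3) + 2) * (B+3) - 1
       else p.2 + (p.1 - 1) * (B+3))
  · intro p hp
    simp only [Finset.mem_union, Finset.mem_product, Finset.mem_Icc, Finset.mem_singleton] at hp ⊢
    omega
  · have hd1 : Disjoint ({1} ×ˢ Finset.Icc 1 (2*(B+2)))
        (Finset.Icc 2 (2*(A+2)) ×ˢ Finset.Icc (B+3) (2*(B+2))) := by
      rw [Finset.disjoint_left]
      intro p hp hp'
      simp only [Finset.mem_product, Finset.mem_Icc, Finset.mem_singleton] at hp hp'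
      omega
    have hd2 : Disjoint (({1} ×ˢ Finset.Icc 1 (2*(B+2))) ∪
        (Finset.Icc 2 (2*(A+2)) ×ˢ Finset.Icc (B+3) (2*(B+2))))
        (Finset.Icc (A+3) (2*(A+2)) ×ˢ {B+2}) := by
      rw [Finset.disjoint_left]
      intro p hp hp'
      simp only [Finset.mem_union, Finset.mem_product, Finset.mem_Icc, Finset.mem_singleton] at hp hp'
      omega
    rw [Finset.card_union_of_disjoint hd2, Finset.card_union_of_disjoint hd1]
    simp only [Finset.card_product, Finset.card_singleton, Nat.card_Icc]
    have h1 : 2*(A+2)+1-1 = 2*(A+2) := by omega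
    have h2 : 2*(B+2)+1-1 = 2*(B+2) := by omega
    have h3 : 2*(B+2)+1-(B+3) = B+2 := by omega
    have h4 : 2*(A+2)+1-(A+3) = A+2 := by omega
    have h5 : 2*(A+2)+1-2 = 2*A+3 := by omega
    rw [h1, h2, h3, h4, h5]
    exact le_of_eq (by ring)
  · intro p hp
    obtain ⟨a, b⟩ := p
    simp only [Finset.mem_union, Finset.mem_product, Finset.mem_Icc, Finset.mem_singleton] at hp
    rcases hp with (⟨ha, hb⟩ | ⟨ha, hb⟩) | ⟨ha, hb⟩
    · subst ha
      rw [if_pos rfl]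
      exact ⟨hb.1, by rw [one_mul]⟩
    · rw [if_neg (by omega), if_neg (by omega)]
      obtain ⟨k, hk⟩ : ∃ k, a = k + 2 := ⟨a - 2, by omega⟩
      rw [show a - 1 = k + 1 from by omega]
      have h1 : (k+1) * (B+3) ≤ (k+1) * b := Nat.mul_le_mul_left _ (by omega)
      have h2 : b + (k+1) * b = (k+2) * b := by ring
      have h3 : a * b = (k+2) * b := by rw [hk]
      simp only []
      omega
    · rw [if_neg (by omega), if_pos hb]
      obtain ⟨j, hj⟩ : ∃ j, a = A + 3 + j := ⟨a - (A+3), by omega⟩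
      have hjle : j ≤ A + 1 := by omega
      rw [show a - (A+3) + 2 = j + 2 from by omega]
      have h1 : (j+2) * (B+3) = j*B + 3*j + 2*B + 6 := by ring
      have h2 : a * b = A*B + 2*A + 3*B + 6 + j*B + 2*j := by
        rw [hj, hb]; ring
      have h3 : j * B ≤ A * B + B := by
        calc j * B ≤ (A+1) * B := Nat.mul_le_mul_right _ hjle
          _ = A * B + B := by ring
      have h0 : (a, b).1 * (a, b).2 = a * b := rfl
      omega
  · intro p hp p' hp' he
    obtain ⟨a, b⟩ := p
    obtain ⟨a', b'⟩ := p'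
    simp only [Finset.coe_union, Set.mem_union, Finset.coe_product, Set.mem_prod,
      Finset.mem_coe, Finset.mem_Icc, Finset.mem_singleton, Finset.coe_singleton,
      Set.mem_singleton_iff] at hp hp'
    simp only [] at he
    have main : ∀ a b a' b' : ℕ,
        (((a = 1 ∧ 1 ≤ b ∧ b ≤ 2*(B+2)) ∨
         ((2 ≤ a ∧ a ≤ 2*(A+2)) ∧ (B+3 ≤ b ∧ b ≤ 2*(B+2)))) ∨
         ((A+3 ≤ a ∧ a ≤ 2*(A+2)) ∧ b = B+2)) →
        (((a' = 1 ∧ 1 ≤ b' ∧ b' ≤ 2*(B+2)) ∨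
         ((2 ≤ a' ∧ a' ≤ 2*(A+2)) ∧ (B+3 ≤ b' ∧ b' ≤ 2*(B+2)))) ∨
         ((A+3 ≤ a' ∧ a' ≤ 2*(A+2)) ∧ b' = B+2)) →
        (if a = 1 then b else if b = B+2 then (a - (A+3) + 2) * (B+3) - 1
          else b + (a - 1) * (B+3)) =
        (if a' = 1 then b' else if b' = B+2 then (a' - (A+3) + 2) * (B+3) - 1
          else b' + (a' - 1) * (B+3)) →
        a = a' ∧ b = b' := by
      -- key case analysis, with symmetry handled by proving an auxiliary "ordered" statement
      intro a b a' b' hp hp' he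
      rcases hp with (⟨ha, hb⟩ | ⟨⟨ha2, ha⟩, hb2, hb⟩) | ⟨⟨ha2, ha⟩, hb⟩ <;>
        rcases hp' with (⟨ha', hb'⟩ | ⟨⟨ha2', ha'⟩, hb2', hb'⟩) | ⟨⟨ha2', ha'⟩, hb'⟩
      -- (1,1)
      · rw [if_pos ha, if_pos ha'] at he
        exact ⟨ha.trans ha'.symm, he⟩
      -- (1,2)
      · exfalso
        rw [if_pos ha, if_neg (by omega), if_neg (by omega)] at he
        obtain ⟨k', hk'⟩ : ∃ k, a' = k + 2 := ⟨a' - 2, by omega⟩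
        rw [show a' - 1 = k' + 1 from by omega] at he
        have : B+3 ≤ (k'+1) * (B+3) := Nat.le_mul_of_pos_left _ (by omega)
        omega
      -- (1,3)
      · exfalso
        rw [if_pos ha, if_neg (by omega), if_pos hb'] at he
        obtain ⟨j', hj'⟩ : ∃ j, a' = A + 3 + j := ⟨a' - (A+3), by omega⟩
        rw [show a' - (A+3) + 2 = j' + 2 from by omega] at he
        have h1 : 2 * (B+3) ≤ (j'+2) * (B+3) := Nat.mul_le_mul_right _ (by omega)
        omega
      -- (2,1)
      · exfalso
        rw [if_neg (by omega), if_neg (by omega), if_pos ha'] at he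
        obtain ⟨k, hk⟩ : ∃ k0, a = k0 + 2 := ⟨a - 2, by omega⟩
        rw [show a - 1 = k + 1 from by omega] at he
        have : B+3 ≤ (k+1) * (B+3) := Nat.le_mul_of_pos_left _ (by omega)
        omega
      -- (2,2)
      · rw [if_neg (by omega), if_neg (by omega), if_neg (by omega), if_neg (by omega)] at he
        obtain ⟨k, hk⟩ : ∃ k0, a = k0 + 2 := ⟨a - 2, by omega⟩
        obtain ⟨k', hk'⟩ : ∃ k0, a' = k0 + 2 := ⟨a' - 2, by omega⟩
        rw [show a - 1 = k + 1 from by omega, show a' - 1 = k' + 1 from by omega] at he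
        have e1 : (k+1)*(B+3) = k*(B+3)+(B+3) := by ring
        have e2 : (k'+1)*(B+3) = k'*(B+3)+(B+3) := by ring
        have hkk : k = k' := by
          rcases lt_trichotomy k k' with h | h | h
          · exfalso; have := mul_ge_succ (k := k) (k' := k') (c := B+3) h; omega
          · exact h
          · exfalso; have := mul_ge_succ (k := k') (k' := k) (c := B+3) h; omega
        subst hkk
        exact ⟨by omega, by omega⟩
      -- (2,3)
      · exfalso
        rw [if_neg (by omega), if_neg (by omega), if_neg (by omega), if_pos hb'] at he
        obtain ⟨k, hk⟩ : ∃ k0, a = k0 + 2 := ⟨a - 2, by omega⟩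
        obtain ⟨j', hj'⟩ : ∃ j, a' = A + 3 + j := ⟨a' - (A+3), by omega⟩
        rw [show a - 1 = k + 1 from by omega, show a' - (A+3) + 2 = j' + 2 from by omega] at he
        have h1 : 2 * (B+3) ≤ (j'+2) * (B+3) := Nat.mul_le_mul_right _ (by omega)
        rcases lt_trichotomy (j'+2) (k+2) with h | h | h
        · have h2 : (j'+2) * (B+3) ≤ (k+1) * (B+3) := Nat.mul_le_mul_right _ (by omega)
          omega
        · have h2 : (j'+2) * (B+3) = (k+1) * (B+3) + (B+3) := by
            rw [h]; ring
          omega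
        · have h2 : (k+1) * (B+3) + 2*(B+3) ≤ (j'+2) * (B+3) := by
            calc (k+1) * (B+3) + 2*(B+3) = (k+3) * (B+3) := by ring
              _ ≤ (j'+2) * (B+3) := Nat.mul_le_mul_right _ (by omega)
          omega
      -- (3,1)
      · exfalso
        rw [if_neg (by omega), if_pos hb, if_pos ha'] at he
        obtain ⟨j, hj⟩ : ∃ j0, a = A + 3 + j0 := ⟨a - (A+3), by omega⟩
        rw [show a - (A+3) + 2 = j + 2 from by omega] at he
        have h1 : 2 * (B+3) ≤ (j+2) * (B+3) := Nat.mul_le_mul_right _ (by omega)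
        omega
      -- (3,2)
      · exfalso
        rw [if_neg (by omega), if_pos hb, if_neg (by omega), if_neg (by omega)] at he
        obtain ⟨j, hj⟩ : ∃ j0, a = A + 3 + j0 := ⟨a - (A+3), by omega⟩
        obtain ⟨k', hk'⟩ : ∃ k0, a' = k0 + 2 := ⟨a' - 2, by omega⟩
        rw [show a - (A+3) + 2 = j + 2 from by omega, show a' - 1 = k' + 1 from by omega] at he
        have h1 : 2 * (B+3) ≤ (j+2) * (B+3) := Nat.mul_le_mul_right _ (by omega)
        rcases lt_trichotomy (j+2) (k'+2) with h | h | h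
        · have h2 : (j+2) * (B+3) ≤ (k'+1) * (B+3) := Nat.mul_le_mul_right _ (by omega)
          omega
        · have h2 : (j+2) * (B+3) = (k'+1) * (B+3) + (B+3) := by
            rw [h]; ring
          omega
        · have h2 : (k'+1) * (B+3) + 2*(B+3) ≤ (j+2) * (B+3) := by
            calc (k'+1) * (B+3) + 2*(B+3) = (k'+3) * (B+3) := by ring
              _ ≤ (j+2) * (B+3) := Nat.mul_le_mul_right _ (by omega)
          omega
      -- (3,3)
      · rw [if_neg (by omega), if_pos hb, if_neg (by omega), if_pos hb'] at he
        obtain ⟨j, hj⟩ : ∃ j0, a = A + 3 + j0 := ⟨a - (A+3), by omega⟩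
        obtain ⟨j', hj'⟩ : ∃ j0, a' = A + 3 + j0 := ⟨a' - (A+3), by omega⟩
        rw [show a - (A+3) + 2 = j + 2 from by omega,
          show a' - (A+3) + 2 = j' + 2 from by omega] at he
        have h1 : 2 * (B+3) ≤ (j+2) * (B+3) := Nat.mul_le_mul_right _ (by omega)
        have h1' : 2 * (B+3) ≤ (j'+2) * (B+3) := Nat.mul_le_mul_right _ (by omega)
        have h6 : (j+2) * (B+3) = (j'+2) * (B+3) := by omega
        have h7 : j + 2 = j' + 2 := Nat.eq_of_mul_eq_mul_right (by omega) h6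
        exact ⟨by omega, by omega⟩
    have := main a b a' b' hp hp' he
    exact Prod.ext this.1 this.2


lemma final (ℓ t : ℕ) (C : ℕ) (h : cb ℓ t C) (R : ℤ) (hR : 2*(C:ℤ) ≤ R) :
    2 * S (((Finset.Icc 1 ℓ ×ˢ Finset.Icc 1 t).val.map
        (fun p => ((p.1 * p.2 : ℕ) : ℤ))).sort (· ≤ ·)) ≤ R := by
  have := S_le_of_cb ℓ t C h
  linarith

theorem stmt10 (ℓ t : ℕ) (hℓ : 0 < ℓ) (ht : 0 < t) :
    2 * S (((Finset.Icc 1 ℓ ×ˢ Finset.Icc 1 t).val.map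
        (fun p => ((p.1 * p.2 : ℕ) : ℤ))).sort (· ≤ ·)) ≤ (ℓ : ℤ) * ((t : ℤ) - 1) ∧
    (¬((t = 2 ∧ Even ℓ) ∨ (ℓ = 2 ∧ Even t)) →
      2 * S (((Finset.Icc 1 ℓ ×ˢ Finset.Icc 1 t).val.map
          (fun p => ((p.1 * p.2 : ℕ) : ℤ))).sort (· ≤ ·)) ≤ ((ℓ : ℤ) - 1) * ((t : ℤ) - 1)) := by
  have hQ : (0:ℤ) ≤ (ℓ:ℤ) := Nat.cast_nonneg _
  constructor
  · -- part 1 : 2 S ≤ ℓ (t-1)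
    rcases Nat.even_or_odd t with hte | hto
    · rcases Nat.even_or_odd ℓ with hle | hlo
      · -- both even
        obtain ⟨u, hu⟩ := hte
        obtain ⟨w, hw⟩ := hle
        by_cases h2 : t = 2
        · -- t = 2, ℓ even
          obtain ⟨m, hm⟩ : ∃ m, ℓ = 2*(m+1) := ⟨ℓ/2 - 1, by omega⟩
          rw [hm, h2]
          apply final _ _ _ (cb3 m)
          push_cast
          nlinarith [ (show (0:ℤ) ≤ (m:ℤ) from Nat.cast_nonneg _) ]
        · by_cases h3 : ℓ = 2
          · -- ℓ = 2, t even ≥ 4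
            obtain ⟨s, hs⟩ : ∃ s, t = 2*(s+1) := ⟨t/2 - 1, by omega⟩
            rw [h3, hs]
            apply final _ _ _ (cb4 s)
            push_cast
            nlinarith [ (show (0:ℤ) ≤ (s:ℤ) from Nat.cast_nonneg _) ]
          · -- both even, both ≥ 4
            obtain ⟨A, hA⟩ : ∃ A, ℓ = 2*(A+2) := ⟨ℓ/2 - 2, by omega⟩
            obtain ⟨B, hB⟩ : ∃ B, t = 2*(B+2) := ⟨t/2 - 2, by omega⟩
            rw [hA, hB]
            apply final _ _ _ (cb2 A B)
            push_cast
            nlinarith [ (show (0:ℤ) ≤ (A:ℤ) from Nat.cast_nonneg _),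
              (show (0:ℤ) ≤ (B:ℤ) from Nat.cast_nonneg _),
              mul_nonneg (show (0:ℤ) ≤ (A:ℤ) from Nat.cast_nonneg _)
                (show (0:ℤ) ≤ (B:ℤ) from Nat.cast_nonneg _) ]
      · -- t even, ℓ odd: use swapped cb1
        obtain ⟨q, hq⟩ := hlo
        obtain ⟨m, hm⟩ : ∃ m, t = m+1 := ⟨t - 1, by omega⟩
        have h := cb_swap (cb1 m q)
        rw [← hq, ← hm] at h
        apply final _ _ _ h
        push_cast [hq, hm]
        nlinarith [ (show (0:ℤ) ≤ (m:ℤ) from Nat.cast_nonneg _),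
          (show (0:ℤ) ≤ (q:ℤ) from Nat.cast_nonneg _),
          mul_nonneg (show (0:ℤ) ≤ (m:ℤ) from Nat.cast_nonneg _)
            (show (0:ℤ) ≤ (q:ℤ) from Nat.cast_nonneg _) ]
    · -- t odd
      obtain ⟨q, hq⟩ := hto
      obtain ⟨m, hm⟩ : ∃ m, ℓ = m+1 := ⟨ℓ - 1, by omega⟩
      have h := cb1 m q
      rw [← hq, ← hm] at h
      apply final _ _ _ h
      push_cast [hq, hm]
      nlinarith [ (show (0:ℤ) ≤ (m:ℤ) from Nat.cast_nonneg _),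
        (show (0:ℤ) ≤ (q:ℤ) from Nat.cast_nonneg _),
        mul_nonneg (show (0:ℤ) ≤ (m:ℤ) from Nat.cast_nonneg _)
          (show (0:ℤ) ≤ (q:ℤ) from Nat.cast_nonneg _) ]
  · -- part 2
    intro hexc
    rcases Nat.even_or_odd t with hte | hto
    · rcases Nat.even_or_odd ℓ with hle | hlo
      · -- both even; exceptional cases excluded so ℓ, t ≥ 4
        have h2 : t ≠ 2 := fun h => hexc (Or.inl ⟨h, hle⟩)
        have h3 : ℓ ≠ 2 := fun h => hexc (Or.inr ⟨h, hte⟩)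
        obtain ⟨u, hu⟩ := hte
        obtain ⟨w, hw⟩ := hle
        obtain ⟨A, hA⟩ : ∃ A, ℓ = 2*(A+2) := ⟨ℓ/2 - 2, by omega⟩
        obtain ⟨B, hB⟩ : ∃ B, t = 2*(B+2) := ⟨t/2 - 2, by omega⟩
        rw [hA, hB]
        apply final _ _ _ (cb2 A B)
        push_cast
        nlinarith [ (show (0:ℤ) ≤ (A:ℤ) from Nat.cast_nonneg _),
          (show (0:ℤ) ≤ (B:ℤ) from Nat.cast_nonneg _),
          mul_nonneg (show (0:ℤ) ≤ (A:ℤ) from Nat.cast_nonneg _)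
            (show (0:ℤ) ≤ (B:ℤ) from Nat.cast_nonneg _) ]
      · -- t even, ℓ odd
        obtain ⟨q, hq⟩ := hlo
        obtain ⟨m, hm⟩ : ∃ m, t = m+1 := ⟨t - 1, by omega⟩
        have h := cb_swap (cb1 m q)
        rw [← hq, ← hm] at h
        apply final _ _ _ h
        push_cast [hq, hm]
        nlinarith [ (show (0:ℤ) ≤ (m:ℤ) from Nat.cast_nonneg _),
          (show (0:ℤ) ≤ (q:ℤ) from Nat.cast_nonneg _) ]
    · -- t odd
      obtain ⟨q, hq⟩ := hto
      obtain ⟨m, hm⟩ : ∃ m, ℓ = m+1 := ⟨ℓ - 1, by omega⟩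
      have h := cb1 m q
      rw [← hq, ← hm] at h
      apply final _ _ _ h
      push_cast [hq, hm]
      nlinarith [ (show (0:ℤ) ≤ (m:ℤ) from Nat.cast_nonneg _),
        (show (0:ℤ) ≤ (q:ℤ) from Nat.cast_nonneg _) ]
end

section
/- Let d = (d_1, …, d_s) be a non-decreasing vector of positive integers. For each integer t ≥ 0, let p_t := #{ j : 0 ≤ j ≤ s−1 and 0 ≤ t−j < d_{s−j} } (the number of lattice points of the standard configuration C_d on the diagonal x+y = t). Then the least integer t ≥ 0 with p_t < t+1 equals s + min(0, d_1 − 1, d_2 − 2, …, d_s − s). -/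
theorem stmt15 (s : ℕ) (hs : 0 < s) (d : ℕ → ℕ)
    (hpos : ∀ i ∈ Finset.Icc 1 s, 0 < d i)
    (hmono : ∀ i j, 1 ≤ i → i ≤ j → j ≤ s → d i ≤ d j) :
    ((sInf {t : ℕ |
        ((Finset.range s).filter (fun j => j ≤ t ∧ t - j < d (s - j))).card < t + 1} : ℕ) : ℤ) =
      (s : ℤ) + Finset.fold min 0 (fun i => (d i : ℤ) - (i : ℤ)) (Finset.Icc 1 s) := by
  set m : ℤ := Finset.fold min 0 (fun i => (d i : ℤ) - (i : ℤ)) (Finset.Icc 1 s) with hm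
  have hmle : m ≤ 0 ∧ ∀ i ∈ Finset.Icc 1 s, m ≤ (d i : ℤ) - i :=
    (Finset.le_fold_min m).mp le_rfl
  have hcases : (0:ℤ) ≤ m ∨ ∃ k ∈ Finset.Icc 1 s, (d k : ℤ) - k ≤ m :=
    (Finset.fold_min_le m).mp le_rfl
  have hm1s : 1 - (s : ℤ) ≤ m := by
    rw [hm]
    refine (Finset.le_fold_min _).mpr ⟨by omega, fun i hi => ?_⟩
    simp only [Finset.mem_Icc] at hi
    have h1 := hpos i (Finset.mem_Icc.mpr hi)
    omega
  have hsm : (0:ℤ) ≤ (s:ℤ) + m := by omega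
  set N : ℕ := ((s:ℤ) + m).toNat with hN
  have hNz : (N : ℤ) = (s : ℤ) + m := Int.toNat_of_nonneg hsm
  have hNs : N ≤ s := by omega
  -- the key counting lemma: for t < N, the filter is all of range (t+1)
  have key : ∀ t : ℕ, t < N →
      ((Finset.range s).filter (fun j => j ≤ t ∧ t - j < d (s - j))).card = t + 1 := by
    intro t ht
    have hts : t < s := lt_of_lt_of_le ht hNs
    have heq : (Finset.range s).filter (fun j => j ≤ t ∧ t - j < d (s - j))
        = Finset.range (t + 1) := by
      ext j
      simp only [Finset.mem_filter, Finset.mem_range]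
      constructor
      · rintro ⟨_, hjt, _⟩; omega
      · intro hj
        have hjt : j ≤ t := by omega
        have hjs : j < s := by omega
        have hi : s - j ∈ Finset.Icc 1 s := Finset.mem_Icc.mpr ⟨by omega, by omega⟩
        have h1 := hmle.2 _ hi
        have hcast : ((s - j : ℕ) : ℤ) = (s : ℤ) - j := by omega
        have h2 : (t : ℤ) < (d (s - j) : ℤ) + j := by
          have h3 : (t : ℤ) < (s : ℤ) + m := by omega
          rw [hcast] at h1
          linarith
        refine ⟨hjs, hjt, ?_⟩
        omega
    rw [heq, Finset.card_range]
  have hNmem : N ∈ {t : ℕ |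
      ((Finset.range s).filter (fun j => j ≤ t ∧ t - j < d (s - j))).card < t + 1} := by
    rcases hcases with h0 | ⟨k, hk, hk2⟩
    · -- m = 0, N = s
      have hNeq : N = s := by omega
      have : ((Finset.range s).filter (fun j => j ≤ N ∧ N - j < d (s - j))).card ≤ s := by
        calc _ ≤ (Finset.range s).card := Finset.card_le_card (Finset.filter_subset _ _)
          _ = s := Finset.card_range s
      simpa using lt_of_le_of_lt this (show s < N + 1 by omega)
    · simp only [Finset.mem_Icc] at hk
      have hmk : m = (d k : ℤ) - k := le_antisymm (hmle.2 k (Finset.mem_Icc.mpr hk)) hk2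
      have hdk := hpos k (Finset.mem_Icc.mpr hk)
      have hNk : N = s - k + d k := by omega
      set j₀ := s - k with hj0
      have hsub : (Finset.range s).filter (fun j => j ≤ N ∧ N - j < d (s - j))
          ⊆ (Finset.range (N + 1)).erase j₀ := by
        intro j hj
        simp only [Finset.mem_filter, Finset.mem_range] at hj
        obtain ⟨hjs, hjN, hjd⟩ := hj
        refine Finset.mem_erase.mpr ⟨?_, Finset.mem_range.mpr (by omega)⟩
        intro hjj0
        subst hjj0
        have hsj : s - j₀ = k := by omega
        rw [hsj] at hjd
        omega
      have hj0mem : j₀ ∈ Finset.range (N + 1) := Finset.mem_range.mpr (by omega)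
      have hcard : ((Finset.range (N + 1)).erase j₀).card = N := by
        rw [Finset.card_erase_of_mem hj0mem, Finset.card_range]; omega
      have := Finset.card_le_card hsub
      rw [hcard] at this
      simpa using lt_of_le_of_lt this (show N < N + 1 by omega)
  have hlow : ∀ t ∈ {t : ℕ |
      ((Finset.range s).filter (fun j => j ≤ t ∧ t - j < d (s - j))).card < t + 1}, N ≤ t := by
    intro t ht
    by_contra h
    push_neg at h
    have := key t h
    simp only [Set.mem_setOf_eq] at ht
    omega
  have hinf : sInf {t : ℕ |
      ((Finset.range s).filter (fun j => j ≤ t ∧ t - j < d (s - j))).card < t + 1} = N :=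
    le_antisymm (Nat.sInf_le hNmem) (le_csInf ⟨N, hNmem⟩ hlow)
  rw [hinf, hNz]
end
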